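/- arXiv:2303.07941 — 7 statements merged into one kernel-verified Lean document; each statement's English description precedes it below -/
import Mathlib

section
/- Let U : (0,∞) → ℝ be increasing, strictly concave, twice continuously differentiable, satisfying the Inada conditions U'(0+) = ∞ and U'(∞) = 0, and suppose there is r > 0 such that RRA[U](x) ≥ r for all x > 0. Then there exist constants δ > 0 and K₁, K₂ > 0 such that the conjugate function satisfies Ũ(y) < K₁·y^{−δ} + K₂ for all y > 0. -/
open Set Filter Real

/-- Relative risk aversion of a utility function `U` at `x`: `RRA[U](x) = -x·U''(x)/U'(x)`. -/
noncomputable def RRA (U : ℝ → ℝ) (x : ℝ) : ℝ := -x * deriv (deriv U) x / deriv U x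

/-- The conjugate function `Ũ(y) = sup_{x>0} [U(x) − x·y]`. -/
noncomputable def conj (U : ℝ → ℝ) (y : ℝ) : ℝ := sSup ((fun x => U x - x * y) '' Set.Ioi 0)

theorem stmt1 (U : ℝ → ℝ) (r : ℝ) (hr : 0 < r)
    (hmono : StrictMonoOn U (Set.Ioi 0))
    (hconc : StrictConcaveOn ℝ (Set.Ioi 0) U)
    (hsmooth : ContDiffOn ℝ 2 U (Set.Ioi 0))
    (hinada0 : Filter.Tendsto (deriv U) (nhdsWithin 0 (Set.Ioi 0)) Filter.atTop)
    (hinadaInf : Filter.Tendsto (deriv U) Filter.atTop (nhds 0))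
    (hRRA : ∀ x > 0, r ≤ RRA U x) :
    ∃ δ > (0:ℝ), ∃ K₁ > (0:ℝ), ∃ K₂ > (0:ℝ), ∀ y > (0:ℝ),
      conj U y < K₁ * y ^ (-δ) + K₂ := by
  classical
  set r' : ℝ := min r (1/2) with hr'def
  have hr'0 : 0 < r' := lt_min hr (by norm_num)
  have hr'1 : r' < 1 := lt_of_le_of_lt (min_le_right _ _) (by norm_num)
  have hr'r : r' ≤ r := min_le_left _ _
  -- basic differentiability facts
  have hdU : ∀ x ∈ Ioi (0:ℝ), HasDerivAt U (deriv U x) x := fun x hx =>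
    ((hsmooth.differentiableOn (by norm_num)).differentiableAt (isOpen_Ioi.mem_nhds hx)).hasDerivAt
  have hC1 : ContDiffOn ℝ 1 (deriv U) (Set.Ioi 0) :=
    hsmooth.deriv_of_isOpen isOpen_Ioi (by norm_num)
  have hdU2 : ∀ x ∈ Ioi (0:ℝ), HasDerivAt (deriv U) (deriv (deriv U) x) x := fun x hx =>
    ((hC1.differentiableOn one_ne_zero).differentiableAt (isOpen_Ioi.mem_nhds hx)).hasDerivAt
  have hcontU' : ContinuousOn (deriv U) (Set.Ioi 0) := hC1.continuousOn
  have hcontU : ContinuousOn U (Set.Ioi 0) := hsmooth.continuousOn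
  -- positivity of U'
  have hU'pos : ∀ x ∈ Ioi (0:ℝ), 0 < deriv U x := by
    intro x hx
    have hnonneg : 0 ≤ deriv U x := by
      have hs : Tendsto (slope U x) (nhdsWithin x (Ioi x)) (nhds (deriv U x)) :=
        (hasDerivAt_iff_tendsto_slope.1 (hdU x hx)).mono_left
          (nhdsWithin_mono _ (fun z hz => ne_of_gt hz))
      refine ge_of_tendsto hs ?_
      filter_upwards [self_mem_nhdsWithin] with z hz
      have hz' : x < z := hz
      have h1 : U x < U z := hmono hx (lt_trans hx hz') hz'
      have : 0 ≤ (U z - U x) / (z - x) := div_nonneg (by linarith) (by linarith)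
      simpa [slope_def_field] using this
    rcases hnonneg.lt_or_eq with h | h
    · exact h
    · exfalso
      have := hRRA x hx
      rw [RRA, ← h, div_zero] at this
      linarith
  -- second derivative bound
  have hU''le : ∀ x ∈ Ioi (0:ℝ), deriv (deriv U) x ≤ -r' * deriv U x / x := by
    intro x hx
    have hx0 : (0:ℝ) < x := hx
    have hd1 : 0 < deriv U x := hU'pos x hx
    have h := le_trans hr'r (hRRA x hx)
    rw [RRA, le_div_iff₀ hd1] at h
    rw [le_div_iff₀ hx0]
    nlinarith
  -- U' is antitone on (0, ∞)
  have hU'anti : AntitoneOn (deriv U) (Set.Ioi 0) := by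
    refine antitoneOn_of_deriv_nonpos (convex_Ioi 0) hcontU' ?_ ?_
    · rw [interior_Ioi]
      exact fun x hx => ((hdU2 x hx).differentiableAt).differentiableWithinAt
    · rw [interior_Ioi]
      intro x hx
      have hx0 : (0:ℝ) < x := hx
      have := hU''le x hx
      have h2 : -r' * deriv U x / x ≤ 0 := by
        apply div_nonpos_of_nonpos_of_nonneg _ (le_of_lt hx0)
        nlinarith [hU'pos x hx]
      linarith
  -- tangent line estimate
  have htan : ∀ a ∈ Ioi (0:ℝ), ∀ x ∈ Ioi (0:ℝ), U x ≤ U a + deriv U a * (x - a) := by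
    intro a ha x hx
    set φ : ℝ → ℝ := fun t => U a + deriv U a * (t - a) - U t with hφdef
    have ha0 : (0:ℝ) < a := ha
    have hx0 : (0:ℝ) < x := hx
    have hφa : φ a = 0 := by simp [hφdef]
    have hφd : ∀ t ∈ Ioi (0:ℝ), HasDerivAt φ (deriv U a - deriv U t) t := by
      intro t ht
      have h1 : HasDerivAt (fun t => U a + deriv U a * (t - a)) (deriv U a) t := by
        have := (((hasDerivAt_id t).sub_const a).const_mul (deriv U a)).const_add (U a)
        simpa using this
      exact h1.sub (hdU t ht)
    have hkey : 0 ≤ φ x := by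
      rcases le_total a x with hax | hxa
      · -- φ monotone on Ici a
        have hsub : Ici a ⊆ Ioi (0:ℝ) := fun t ht => lt_of_lt_of_le ha0 ht
        have hm : MonotoneOn φ (Ici a) := by
          refine monotoneOn_of_hasDerivWithinAt_nonneg (convex_Ici a) ?_
            (f' := fun t => deriv U a - deriv U t) ?_ ?_
          · exact ((continuous_const.add (continuous_const.mul
              (continuous_id.sub continuous_const))).continuousOn).sub (hcontU.mono hsub)
          · rw [interior_Ici]
            exact fun t ht => (hφd t (lt_trans ha0 ht)).hasDerivWithinAt
          · rw [interior_Ici]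
            intro t ht
            have := hU'anti ha (lt_trans ha0 ht : t ∈ Ioi (0:ℝ)) (le_of_lt ht)
            linarith
        have := hm (self_mem_Ici) hax hax
        rw [hφa] at this; exact this
      · -- φ antitone on Ioc 0 a
        have hsub : Ioc (0:ℝ) a ⊆ Ioi (0:ℝ) := fun t ht => ht.1
        have hm : AntitoneOn φ (Ioc 0 a) := by
          refine antitoneOn_of_hasDerivWithinAt_nonpos (convex_Ioc 0 a) ?_
            (f' := fun t => deriv U a - deriv U t) ?_ ?_
          · exact ((continuous_const.add (continuous_const.mul
              (continuous_id.sub continuous_const))).continuousOn).sub (hcontU.mono hsub)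
          · rw [interior_Ioc]
            exact fun t ht => (hφd t ht.1).hasDerivWithinAt
          · rw [interior_Ioc]
            intro t ht
            have := hU'anti (ht.1 : t ∈ Ioi (0:ℝ)) ha (le_of_lt ht.2)
            linarith
        have := hm ⟨hx0, hxa⟩ ⟨ha0, le_refl a⟩ hxa
        rw [hφa] at this; exact this
    simp only [hφdef] at hkey
    linarith
  -- decay of U' : for t ≥ 1, U'(t) * t^r' ≤ U'(1)
  have hdecay : ∀ t ∈ Ici (1:ℝ), deriv U t * t ^ r' ≤ deriv U 1 := by
    intro t ht
    set g : ℝ → ℝ := fun t => deriv U t * t ^ r' with hgdef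
    have hsub : Ici (1:ℝ) ⊆ Ioi (0:ℝ) := fun z hz => (lt_of_lt_of_le one_pos hz : (0:ℝ) < z)
    have hganti : AntitoneOn g (Ici 1) := by
      refine antitoneOn_of_hasDerivWithinAt_nonpos (convex_Ici 1) ?_
        (f' := fun t => deriv (deriv U) t * t ^ r' + deriv U t * (r' * t ^ (r' - 1))) ?_ ?_
      · exact (hcontU'.mono hsub).mul ((continuousOn_id.rpow_const
          (fun z hz => Or.inl (ne_of_gt (hsub hz)))))
      · rw [interior_Ici]
        intro z hz
        have hz0 : (0:ℝ) < z := lt_trans one_pos hz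
        exact ((hdU2 z hz0).mul (Real.hasDerivAt_rpow_const
          (Or.inl (ne_of_gt hz0)))).hasDerivWithinAt
      · rw [interior_Ici]
        intro z hz
        have hz0 : (0:ℝ) < z := lt_trans one_pos hz
        have hd2 := hU''le z hz0
        have hd1 := hU'pos z hz0
        have hp : (0:ℝ) < z ^ (r' - 1) := Real.rpow_pos_of_pos hz0 _
        have hps : z ^ r' = z ^ (r' - 1) * z := by
          rw [Real.rpow_sub_one (ne_of_gt hz0)]
          field_simp
        have h1 : deriv (deriv U) z * z ≤ -r' * deriv U z := by
          rw [le_div_iff₀ hz0] at hd2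
          linarith
        have heq : deriv (deriv U) z * z ^ r' + deriv U z * (r' * z ^ (r' - 1))
            = z ^ (r' - 1) * (deriv (deriv U) z * z + r' * deriv U z) := by
          rw [hps]; ring
        rw [heq]
        apply mul_nonpos_of_nonneg_of_nonpos (le_of_lt hp)
        linarith
    have := hganti (self_mem_Ici) ht ht
    simpa [hgdef] using this
  set d1 : ℝ := deriv U 1 with hd1def
  have hd1pos : 0 < d1 := hU'pos 1 (by norm_num)
  set c : ℝ := d1 / (1 - r') with hcdef
  have hcpos : 0 < c := div_pos hd1pos (by linarith)
  -- growth bound : for a ≥ 1, U a ≤ U 1 + c * a^(1-r')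
  have hgrowth : ∀ a ∈ Ici (1:ℝ), U a ≤ U 1 + c * a ^ (1 - r') := by
    intro a ha
    set h : ℝ → ℝ := fun t => U t - c * t ^ (1 - r') with hhdef
    have hsub : Ici (1:ℝ) ⊆ Ioi (0:ℝ) := fun z hz => (lt_of_lt_of_le one_pos hz : (0:ℝ) < z)
    have hhanti : AntitoneOn h (Ici 1) := by
      refine antitoneOn_of_hasDerivWithinAt_nonpos (convex_Ici 1) ?_
        (f' := fun t => deriv U t - c * ((1 - r') * t ^ (1 - r' - 1))) ?_ ?_
      · exact (hcontU.mono hsub).sub (continuousOn_const.mul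
          (continuousOn_id.rpow_const (fun z hz => Or.inl (ne_of_gt (hsub hz)))))
      · rw [interior_Ici]
        intro z hz
        have hz0 : (0:ℝ) < z := lt_trans one_pos hz
        exact ((hdU z hz0).sub ((Real.hasDerivAt_rpow_const
          (Or.inl (ne_of_gt hz0))).const_mul c)).hasDerivWithinAt
      · rw [interior_Ici]
        intro z hz
        have hz0 : (0:ℝ) < z := lt_trans one_pos hz
        have hdec := hdecay z (le_of_lt hz : (1:ℝ) ≤ z)
        have hzr : (0:ℝ) < z ^ r' := Real.rpow_pos_of_pos hz0 _
        have hc1 : c * (1 - r') = d1 := by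
          rw [hcdef, div_mul_cancel₀]
          intro h0; rw [sub_eq_zero] at h0; exact absurd h0.symm (ne_of_lt hr'1)
        have hexp : z ^ (1 - r' - 1) = (z ^ r')⁻¹ := by
          rw [show (1 - r' - 1 : ℝ) = -r' by ring, Real.rpow_neg (le_of_lt hz0)]
        rw [hexp]
        have : deriv U z ≤ d1 * (z ^ r')⁻¹ := by
          rw [← div_eq_mul_inv]
          exact (le_div_iff₀ hzr).2 hdec
        calc deriv U z - c * ((1 - r') * (z ^ r')⁻¹)
            = deriv U z - d1 * (z ^ r')⁻¹ := by rw [← hc1]; ring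
          _ ≤ 0 := by linarith
    have h1 : h a ≤ h 1 := hhanti self_mem_Ici ha ha
    have : h 1 = U 1 - c := by simp [hhdef]
    rw [this] at h1
    simp only [hhdef] at h1
    nlinarith [Real.rpow_pos_of_pos (lt_of_lt_of_le one_pos ha : (0:ℝ) < a) (1 - r')]
  -- existence of a with U'(a) = y
  have hexists : ∀ y > (0:ℝ), ∃ a, 0 < a ∧ deriv U a = y := by
    intro y hy
    obtain ⟨x0, hx0y, hx0⟩ :=
      ((hinada0.eventually (eventually_gt_atTop y)).and self_mem_nhdsWithin).exists
    obtain ⟨N, hN⟩ := eventually_atTop.1 (hinadaInf.eventually_lt_const hy)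
    set b : ℝ := max N (x0 + 1) with hbdef
    have hx0b : x0 < b := lt_of_lt_of_le (lt_add_one x0) (le_max_right _ _)
    have hbN : N ≤ b := le_max_left _ _
    have hby : deriv U b < y := hN b hbN
    have hsub : Icc x0 b ⊆ Ioi (0:ℝ) := fun z hz => lt_of_lt_of_le hx0 hz.1
    have := intermediate_value_Icc' (le_of_lt hx0b) (hcontU'.mono hsub)
    obtain ⟨a, ha, hay⟩ := this ⟨le_of_lt hby, le_of_lt hx0y⟩
    exact ⟨a, lt_of_lt_of_le hx0 ha.1, hay⟩
  -- assemble
  set δ : ℝ := (1 - r') / r' with hδdef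
  have hδpos : 0 < δ := div_pos (by linarith) hr'0
  set C : ℝ := c * d1 ^ δ with hCdef
  have hCpos : 0 < C := mul_pos hcpos (Real.rpow_pos_of_pos hd1pos _)
  refine ⟨δ, hδpos, C + 1, by linarith, |U 1| + 1, by positivity, ?_⟩
  intro y hy
  obtain ⟨a, ha0, hay⟩ := hexists y hy
  have hconj : conj U y ≤ U a := by
    rw [conj]
    apply csSup_le (Set.nonempty_Ioi.image _)
    rintro z ⟨x, hx, rfl⟩
    have htx := htan a (Set.mem_Ioi.2 ha0) x hx
    rw [hay] at htx
    have hx0 : (0:ℝ) < x := hx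
    show U x - x * y ≤ U a
    nlinarith [mul_pos ha0 hy]
  have hbound : U a ≤ U 1 + C * y ^ (-δ) := by
    rcases le_or_gt 1 a with h1a | h1a
    · have hg := hgrowth a h1a
      have hdec := hdecay a h1a
      rw [hay] at hdec
      have har : a ^ r' ≤ d1 / y := (le_div_iff₀ hy).2 (by nlinarith)
      have haa : a ≤ (d1 / y) ^ (1/r') := by
        have h2 : (a ^ r') ^ (1/r') ≤ (d1/y) ^ (1/r') :=
          Real.rpow_le_rpow (Real.rpow_nonneg (le_of_lt ha0) _) har (by positivity)
        rwa [← Real.rpow_mul (le_of_lt ha0), mul_one_div, div_self (ne_of_gt hr'0),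
          Real.rpow_one] at h2
      have hpow : a ^ (1-r') ≤ ((d1/y) ^ (1/r')) ^ (1-r') :=
        Real.rpow_le_rpow (le_of_lt ha0) haa (by linarith)
      have heq2 : ((d1/y) ^ (1/r')) ^ (1-r') = d1 ^ δ * y ^ (-δ) := by
        rw [← Real.rpow_mul (div_nonneg hd1pos.le hy.le),
          show (1/r') * (1-r') = δ by rw [hδdef]; ring,
          Real.div_rpow hd1pos.le hy.le, Real.rpow_neg hy.le, div_eq_mul_inv]
      rw [heq2] at hpow
      have hmul : c * a ^ (1-r') ≤ c * (d1 ^ δ * y ^ (-δ)) :=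
        mul_le_mul_of_nonneg_left hpow hcpos.le
      calc U a ≤ U 1 + c * a ^ (1-r') := hg
        _ ≤ U 1 + c * (d1 ^ δ * y ^ (-δ)) := by linarith
        _ = U 1 + C * y ^ (-δ) := by rw [hCdef]; ring
    · have hle : U a ≤ U 1 := le_of_lt (hmono (Set.mem_Ioi.2 ha0) (Set.mem_Ioi.2 one_pos) h1a)
      have h0 : 0 ≤ C * y ^ (-δ) := by positivity
      linarith
  have hyp : 0 < y ^ (-δ) := Real.rpow_pos_of_pos hy _
  have habs := le_abs_self (U 1)
  calc conj U y ≤ U a := hconj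
    _ ≤ U 1 + C * y ^ (-δ) := hbound
    _ < (C + 1) * y ^ (-δ) + (|U 1| + 1) := by nlinarith
end

section
/- Suppose that for every i ∈ {1,…,N}, U_i : (0,∞) → ℝ is an increasing, strictly concave, twice continuously differentiable utility function satisfying the Inada conditions U_i'(0+) = ∞ and U_i'(∞) = 0, and that there exists ε_i > 0 such that RRA[U_i](x) ≥ ε_i + μ_i/(1+μ_i) for all x > 0. Then the map G : ℝ^N → ℝ^N is continuously differentiable and a bijection of ℝ^N. -/
open Real Filter Set

/-- `V(y) = ln U'(e^y)`. -/
noncomputable def Vfun (U : ℝ → ℝ) (y : ℝ) : ℝ := Real.log (deriv U (Real.exp y))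

/-- The map `G : ℝ^N → ℝ^N`,
`G^i(y) = V_i(y^i − μ_i·Σ_{j≠i} y^j) − μ_i·Σ_{j≠i} y^j`. -/
noncomputable def Gmap {N : ℕ} (U : Fin N → ℝ → ℝ) (μ : Fin N → ℝ)
    (y : Fin N → ℝ) : Fin N → ℝ :=
  fun i => Vfun (U i) (y i - μ i * ∑ j ∈ Finset.univ.erase i, y j)
    - μ i * ∑ j ∈ Finset.univ.erase i, y j

section Aux
variable {U : ℝ → ℝ}

lemma aux_derivU_ne {c x : ℝ} (hc : 0 < c) (h : c ≤ RRA U x) : deriv U x ≠ 0 := by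
  intro h0
  rw [RRA, h0, div_zero] at h
  linarith

lemma aux_contDiffOn_derivU (hsm : ContDiffOn ℝ 2 U (Set.Ioi 0)) :
    ContDiffOn ℝ 1 (deriv U) (Set.Ioi 0) := by
  have := hsm.deriv_of_isOpen isOpen_Ioi (m := 1) (by norm_num)
  exact this

lemma aux_derivU_nonneg {x : ℝ} (hmono : StrictMonoOn U (Set.Ioi 0))
    (hdiff : DifferentiableAt ℝ U x) (hx : (0:ℝ) < x) : 0 ≤ deriv U x := by
  have hd := hdiff.hasDerivAt
  have ht : Tendsto (slope U x) (nhdsWithin x (Set.Ioi x)) (nhds (deriv U x)) :=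
    (hasDerivAt_iff_tendsto_slope.1 hd).mono_left
      (nhdsWithin_mono x (fun z hz => ne_of_gt hz))
  refine ge_of_tendsto ht ?_
  filter_upwards [self_mem_nhdsWithin] with z hz
  rw [slope_def_field]
  have hz' : x < z := hz
  have h1 : U x < U z := hmono hx (lt_trans hx hz') hz'
  have h2 : (0:ℝ) < z - x := by linarith
  exact le_of_lt (div_pos (by linarith) h2)

lemma aux_hasDerivAt_V {c : ℝ} (hc : 0 < c)
    (hsm : ContDiffOn ℝ 2 U (Set.Ioi 0)) (hR : ∀ x > 0, c ≤ RRA U x) (y : ℝ) :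
    HasDerivAt (Vfun U) (-(RRA U (Real.exp y))) y := by
  set x := Real.exp y with hxdef
  have hx : 0 < x := Real.exp_pos y
  have hd1 : DifferentiableAt ℝ (deriv U) x := by
    have := (aux_contDiffOn_derivU hsm).differentiableOn one_ne_zero
    exact this.differentiableAt (isOpen_Ioi.mem_nhds hx)
  have hne : deriv U x ≠ 0 := aux_derivU_ne hc (hR x hx)
  have h1 : HasDerivAt Real.exp x y := Real.hasDerivAt_exp y
  have h2 : HasDerivAt (deriv U) (deriv (deriv U) x) x := hd1.hasDerivAt
  have h3 : HasDerivAt Real.log (deriv U x)⁻¹ (deriv U x) := Real.hasDerivAt_log hne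
  have hcomp : HasDerivAt (fun y => deriv U (Real.exp y)) (deriv (deriv U) x * x) y := by
    have := h2.comp y h1; exact this
  have hall : HasDerivAt (Vfun U) ((deriv U x)⁻¹ * (deriv (deriv U) x * x)) y := by
    have := h3.comp y hcomp
    exact this
  convert hall using 1
  rw [RRA]
  field_simp

lemma aux_contDiff_V {c : ℝ} (hc : 0 < c)
    (hsm : ContDiffOn ℝ 2 U (Set.Ioi 0)) (hR : ∀ x > 0, c ≤ RRA U x) :
    ContDiff ℝ 1 (Vfun U) := by
  rw [contDiff_iff_contDiffAt]
  intro y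
  have hx : 0 < Real.exp y := Real.exp_pos y
  have hne : deriv U (Real.exp y) ≠ 0 := aux_derivU_ne hc (hR _ hx)
  have h1 : ContDiffAt ℝ 1 (deriv U) (Real.exp y) :=
    (aux_contDiffOn_derivU hsm).contDiffAt (isOpen_Ioi.mem_nhds hx)
  have h2 : ContDiffAt ℝ 1 Real.log (deriv U (Real.exp y)) := Real.contDiffAt_log.2 hne
  exact h2.comp y (h1.comp y Real.contDiff_exp.contDiffAt)

lemma aux_inverse {ν ε : ℝ} (hν : 0 ≤ ν) (hε : 0 < ε) (hmono : StrictMonoOn U (Set.Ioi 0))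
    (hsm : ContDiffOn ℝ 2 U (Set.Ioi 0)) (hR : ∀ x > 0, ε + ν ≤ RRA U x) :
    ∃ g : ℝ → ℝ, Continuous g ∧ StrictAnti g ∧
      (∀ t, Vfun U (g t) + ν * g t = t) ∧ (∀ b, g (Vfun U b + ν * b) = b) ∧
      Filter.Tendsto g Filter.atTop Filter.atBot ∧
      Filter.Tendsto g Filter.atBot Filter.atTop := by
  have hc : (0:ℝ) < ε + ν := by linarith
  set W : ℝ → ℝ := fun b => Vfun U b + ν * b with hW
  have hWd : ∀ b, HasDerivAt W (ν - RRA U (Real.exp b)) b := by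
    intro b
    have h1 := aux_hasDerivAt_V hc hsm hR b
    have h2 : HasDerivAt (fun b : ℝ => ν * b) ν b := by
      simpa using (hasDerivAt_id b).const_mul ν
    have := h1.add h2
    exact this.congr_deriv (by ring)
  have hWd' : ∀ b, ν - RRA U (Real.exp b) ≤ -ε := by
    intro b
    have := hR (Real.exp b) (Real.exp_pos b)
    linarith
  have hWdiff : ∀ b, DifferentiableAt ℝ W b := fun b => (hWd b).differentiableAt
  have hWderiv : ∀ b, deriv W b = ν - RRA U (Real.exp b) := fun b => (hWd b).deriv
  have hWanti : StrictAnti W := by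
    apply strictAnti_of_deriv_neg
    intro b
    rw [hWderiv b]
    have := hWd' b
    linarith
  have hWcont : Continuous W := by
    have : Differentiable ℝ W := fun b => hWdiff b
    exact this.continuous
  have hWslope : ∀ a b, a ≤ b → W b ≤ W a + (-ε) * (b - a) := by
    intro a b hab
    rcases eq_or_lt_of_le hab with rfl | hab
    · simp
    · obtain ⟨x, hx, hx'⟩ := exists_deriv_eq_slope W hab hWcont.continuousOn
        (fun b _ => hWdiff b |>.differentiableWithinAt)
      rw [hWderiv] at hx'
      have h1 := hWd' x
      have h2 : (W b - W a) / (b - a) ≤ -ε := by rw [← hx']; exact h1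
      have h3 : 0 < b - a := by linarith
      have := (div_le_iff₀ h3).1 h2
      linarith
  have hWtop : Tendsto W atBot atTop := by
    have hlin : Tendsto (fun a : ℝ => W 0 + ε * (-a)) atBot atTop := by
      apply tendsto_atTop_add_const_left
      exact (tendsto_neg_atBot_atTop).const_mul_atTop hε
    refine tendsto_atTop_mono' atBot ?_ hlin
    filter_upwards [eventually_le_atBot (0:ℝ)] with a ha
    have := hWslope a 0 ha
    nlinarith
  have hWbot : Tendsto W atTop atBot := by
    have hlin : Tendsto (fun b : ℝ => W 0 + (-ε) * b) atTop atBot := by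
      apply tendsto_atBot_add_const_left
      exact tendsto_id.const_mul_atTop_of_neg (by linarith)
    refine tendsto_atBot_mono' atTop ?_ hlin
    filter_upwards [eventually_ge_atTop (0:ℝ)] with b hb
    have := hWslope 0 b hb
    nlinarith
  have hWsurj : Function.Surjective W := hWcont.surjective' hWtop hWbot
  have hnegmono : StrictMono (fun b => -(W b)) := fun a b hab => neg_lt_neg (hWanti hab)
  have hnegsurj : Function.Surjective (fun b => -(W b)) :=
    neg_surjective.comp hWsurj
  set F : ℝ ≃o ℝ := StrictMono.orderIsoOfSurjective _ hnegmono hnegsurj with hF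
  have hFapp : ∀ b, F b = -(W b) := fun b => rfl
  refine ⟨fun t => F.symm (-t), ?_, ?_, ?_, ?_, ?_, ?_⟩
  · exact F.symm.continuous.comp continuous_neg
  · intro a b hab
    exact F.symm.strictMono (neg_lt_neg hab)
  · intro t
    have h1 : F (F.symm (-t)) = -t := F.apply_symm_apply _
    rw [hFapp] at h1
    have : W (F.symm (-t)) = t := by linarith
    exact this
  · intro b
    have : F.symm (-(W b)) = b := by rw [← hFapp]; exact F.symm_apply_apply b
    exact this
  · refine tendsto_atBot.2 fun B => ?_
    filter_upwards [eventually_ge_atTop (-(F B))] with t ht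
    have : F.symm (-t) ≤ F.symm (F B) := F.symm.monotone (by linarith)
    rwa [F.symm_apply_apply] at this
  · refine tendsto_atTop.2 fun B => ?_
    filter_upwards [eventually_le_atBot (-(F B))] with t ht
    have : F.symm (F B) ≤ F.symm (-t) := F.symm.monotone (by linarith)
    rwa [F.symm_apply_apply] at this

lemma aux_sum_tendsto_atBot {ι : Type*} (s : Finset ι) (hs : s.Nonempty)
    {f : ι → ℝ → ℝ} {l : Filter ℝ} (h : ∀ i ∈ s, Tendsto (f i) l atBot) :
    Tendsto (fun x => ∑ i ∈ s, f i x) l atBot := by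
  induction s using Finset.cons_induction with
  | empty => exact absurd hs (by simp)
  | cons a s ha ih =>
    simp only [Finset.sum_cons]
    rcases s.eq_empty_or_nonempty with rfl | hs'
    · simpa using h a (by simp)
    · exact Filter.Tendsto.atBot_add_atBot (h a (by simp))
        (ih hs' (fun i hi => h i (by simp [hi])))

lemma aux_sum_tendsto_atTop {ι : Type*} (s : Finset ι) (hs : s.Nonempty)
    {f : ι → ℝ → ℝ} {l : Filter ℝ} (h : ∀ i ∈ s, Tendsto (f i) l atTop) :
    Tendsto (fun x => ∑ i ∈ s, f i x) l atTop := by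
  induction s using Finset.cons_induction with
  | empty => exact absurd hs (by simp)
  | cons a s ha ih =>
    simp only [Finset.sum_cons]
    rcases s.eq_empty_or_nonempty with rfl | hs'
    · simpa using h a (by simp)
    · exact Filter.Tendsto.atTop_add_atTop (h a (by simp))
        (ih hs' (fun i hi => h i (by simp [hi])))

end Aux

theorem stmt2 (N : ℕ) (hN : 2 ≤ N) (U : Fin N → ℝ → ℝ) (lam μ eps : Fin N → ℝ)
    (hlam : ∀ i, lam i ∈ Set.Icc (0:ℝ) 1)
    (hμ : ∀ i, μ i = lam i / ((N : ℝ) - 1))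
    (hmono : ∀ i, StrictMonoOn (U i) (Set.Ioi 0))
    (hconc : ∀ i, StrictConcaveOn ℝ (Set.Ioi 0) (U i))
    (hsmooth : ∀ i, ContDiffOn ℝ 2 (U i) (Set.Ioi 0))
    (hinada0 : ∀ i, Filter.Tendsto (deriv (U i)) (nhdsWithin 0 (Set.Ioi 0)) Filter.atTop)
    (hinadaInf : ∀ i, Filter.Tendsto (deriv (U i)) Filter.atTop (nhds 0))
    (heps : ∀ i, 0 < eps i)
    (hRRA : ∀ i, ∀ x > 0, eps i + μ i / (1 + μ i) ≤ RRA (U i) x) :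
    ContDiff ℝ 1 (Gmap U μ) ∧ Function.Bijective (Gmap U μ) := by
  haveI : NeZero N := ⟨by omega⟩
  have hN2 : (2:ℝ) ≤ (N:ℝ) := by exact_mod_cast hN
  have hNpos : (0:ℝ) < (N:ℝ) := by linarith
  have hμ0 : ∀ i, 0 ≤ μ i := fun i => by
    rw [hμ i]; exact div_nonneg (hlam i).1 (by linarith)
  have h1μ : ∀ i, (0:ℝ) < 1 + μ i := fun i => by have := hμ0 i; linarith
  set ν : Fin N → ℝ := fun i => μ i / (1 + μ i) with hνdef
  have hν0 : ∀ i, 0 ≤ ν i := fun i => div_nonneg (hμ0 i) (le_of_lt (h1μ i))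
  have hνeq : ∀ i, ν i * (1 + μ i) = μ i := fun i => div_mul_cancel₀ _ (h1μ i).ne'
  have hνN : ∀ i, ν i ≤ 1 / N := by
    intro i
    rw [div_le_div_iff₀ (h1μ i) hNpos]
    have hl : μ i * ((N:ℝ) - 1) = lam i := by
      rw [hμ i]; exact div_mul_cancel₀ _ (by linarith)
    nlinarith [(hlam i).2, hμ0 i]
  -- the inverse functions
  have hinv : ∀ i, ∃ g : ℝ → ℝ, Continuous g ∧ StrictAnti g ∧
      (∀ t, Vfun (U i) (g t) + ν i * g t = t) ∧
      (∀ b, g (Vfun (U i) b + ν i * b) = b) ∧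
      Filter.Tendsto g Filter.atTop Filter.atBot ∧
      Filter.Tendsto g Filter.atBot Filter.atTop :=
    fun i => aux_inverse (hν0 i) (heps i) (hmono i) (hsmooth i) (hRRA i)
  choose g hgc hganti hgW hWg hgbot hgtop using hinv
  have hceps : ∀ i, (0:ℝ) < eps i + ν i := fun i => by
    have := heps i; have := hν0 i; linarith
  -- C¹ smoothness
  have hVC1 : ∀ i, ContDiff ℝ 1 (Vfun (U i)) :=
    fun i => aux_contDiff_V (hceps i) (hsmooth i) (hRRA i)
  have hGC1 : ContDiff ℝ 1 (Gmap U μ) := by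
    rw [contDiff_pi]
    intro i
    have hproj : ∀ j : Fin N, ContDiff ℝ 1 (fun y : Fin N → ℝ => y j) :=
      fun j => (contDiff_pi.1 contDiff_id) j
    have hsum : ContDiff ℝ 1 (fun y : Fin N → ℝ => ∑ j ∈ Finset.univ.erase i, y j) :=
      ContDiff.sum fun j _ => hproj j
    have hlin : ContDiff ℝ 1
        (fun y : Fin N → ℝ => y i - μ i * ∑ j ∈ Finset.univ.erase i, y j) :=
      (hproj i).sub (contDiff_const.mul hsum)
    exact ((hVC1 i).comp hlin).sub (contDiff_const.mul hsum)
  refine ⟨hGC1, ?_⟩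
  -- the key identity
  have hGeq : ∀ (y : Fin N → ℝ) (i : Fin N), Gmap U μ y i =
      (Vfun (U i) ((1 + μ i) * y i - μ i * ∑ j, y j)
        + ν i * ((1 + μ i) * y i - μ i * ∑ j, y j)) - ν i * ∑ j, y j := by
    intro y i
    have hs : ∑ j ∈ Finset.univ.erase i, y j = (∑ j, y j) - y i := by
      have := Finset.sum_erase_add Finset.univ y (Finset.mem_univ i)
      linarith
    have harg : y i - μ i * ((∑ j, y j) - y i) = (1 + μ i) * y i - μ i * ∑ j, y j := by
      ring
    rw [Gmap]
    simp only [hs, harg]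
    have hlin : μ i * ((∑ j, y j) - y i)
        = ν i * (∑ j, y j) - ν i * ((1 + μ i) * y i - μ i * ∑ j, y j) := by
      linear_combination (y i - (∑ j, y j)) * hνeq i
    linarith
  -- the scalar functions Φ and Ψ
  set Φ : (Fin N → ℝ) → ℝ → Fin N → ℝ :=
    fun z S i => g i (z i + ν i * S) / (1 + μ i) + (ν i - 1 / N) * S with hΦdef
  set Ψ : (Fin N → ℝ) → ℝ → ℝ := fun z S => ∑ i, Φ z S i with hΨdef
  have hΦanti : ∀ z i, StrictAnti (fun S => Φ z S i) := by
    intro z i a b hab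
    rcases (hμ0 i).eq_or_lt with h0 | h0
    · have hν0' : ν i = 0 := by simp [hνdef, ← h0]
      have hN' : (0:ℝ) < 1 / N := by positivity
      simp only [hΦdef, hν0', zero_mul, add_zero, zero_sub]
      have : -(1 / (N:ℝ)) * b < -(1 / N) * a := by nlinarith
      linarith
    · have hνpos : 0 < ν i := div_pos h0 (h1μ i)
      have h1 : g i (z i + ν i * b) < g i (z i + ν i * a) := hganti i (by nlinarith)
      have h2 : g i (z i + ν i * b) / (1 + μ i) < g i (z i + ν i * a) / (1 + μ i) :=
        div_lt_div_of_pos_right h1 (h1μ i)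
      have h3 : (ν i - 1 / N) * b ≤ (ν i - 1 / N) * a := by nlinarith [hνN i]
      simp only [hΦdef]
      linarith
  have hΨanti : ∀ z, StrictAnti (Ψ z) := by
    intro z a b hab
    exact Finset.sum_lt_sum_of_nonempty Finset.univ_nonempty
      (fun i _ => hΦanti z i hab)
  have hΨcont : ∀ z, Continuous (Ψ z) := by
    intro z
    apply continuous_finset_sum
    intro i _
    apply Continuous.add
    · exact (((hgc i).comp (by continuity)).div_const _)
    · exact continuous_const.mul continuous_id
  have hΨbot : ∀ z, Tendsto (Ψ z) atTop atBot := by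
    intro z
    apply aux_sum_tendsto_atBot _ Finset.univ_nonempty
    intro i _
    rcases (hμ0 i).eq_or_lt with h0 | h0
    · have hν0' : ν i = 0 := by simp [hνdef, ← h0]
      simp only [hΦdef, hν0', zero_mul, add_zero, zero_sub]
      apply tendsto_atBot_add_const_left
      have hN' : (0:ℝ) < 1 / N := by positivity
      exact tendsto_id.const_mul_atTop_of_neg (by linarith)
    · have hνpos : 0 < ν i := div_pos h0 (h1μ i)
      have hb : Tendsto (fun S => g i (z i + ν i * S)) atTop atBot := by
        apply (hgbot i).comp
        apply tendsto_atTop_add_const_left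
        exact tendsto_id.const_mul_atTop hνpos
      have hb2 : Tendsto (fun S => g i (z i + ν i * S) / (1 + μ i)) atTop atBot :=
        hb.atBot_div_const (h1μ i)
      refine tendsto_atBot_mono' atTop ?_ hb2
      filter_upwards [eventually_ge_atTop (0:ℝ)] with S hS
      have h3 : (ν i - 1 / N) * S ≤ 0 := mul_nonpos_of_nonpos_of_nonneg
        (by have := hνN i; linarith) hS
      simp only [hΦdef]
      linarith
  have hΨtop : ∀ z, Tendsto (Ψ z) atBot atTop := by
    intro z
    apply aux_sum_tendsto_atTop _ Finset.univ_nonempty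
    intro i _
    rcases (hμ0 i).eq_or_lt with h0 | h0
    · have hν0' : ν i = 0 := by simp [hνdef, ← h0]
      simp only [hΦdef, hν0', zero_mul, add_zero, zero_sub]
      apply tendsto_atTop_add_const_left
      have : (0:ℝ) < 1 / N := by positivity
      exact (tendsto_neg_atBot_atTop).const_mul_atTop this |>.congr (by intro x; ring)
    · have hνpos : 0 < ν i := div_pos h0 (h1μ i)
      have hb : Tendsto (fun S => g i (z i + ν i * S)) atBot atTop := by
        apply (hgtop i).comp
        apply tendsto_atBot_add_const_left
        exact tendsto_id.const_mul_atBot hνpos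
      have hb2 : Tendsto (fun S => g i (z i + ν i * S) / (1 + μ i)) atBot atTop :=
        hb.atTop_div_const (h1μ i)
      refine tendsto_atTop_mono' atBot ?_ hb2
      filter_upwards [eventually_le_atBot (0:ℝ)] with S hS
      have h3 : 0 ≤ (ν i - 1 / N) * S := by nlinarith [hνN i]
      simp only [hΦdef]
      linarith
  have hΨsurj : ∀ z, Function.Surjective (Ψ z) :=
    fun z => (hΨcont z).surjective' (hΨtop z) (hΨbot z)
  -- if Gmap y = z then for S = ∑ y, Ψ z S = 0 and y is recovered from S
  have hkey : ∀ (y : Fin N → ℝ) (z : Fin N → ℝ), Gmap U μ y = z →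
      Ψ z (∑ j, y j) = 0 ∧
      ∀ i, (1 + μ i) * y i - μ i * (∑ j, y j) = g i (z i + ν i * (∑ j, y j)) := by
    intro y z hGz
    set S := ∑ j, y j with hSdef
    have hb : ∀ i, (1 + μ i) * y i - μ i * S = g i (z i + ν i * S) := by
      intro i
      have h1 : z i = (Vfun (U i) ((1 + μ i) * y i - μ i * S)
          + ν i * ((1 + μ i) * y i - μ i * S)) - ν i * S := by
        rw [← hGz]; exact hGeq y i
      have h2 : z i + ν i * S = Vfun (U i) ((1 + μ i) * y i - μ i * S)
          + ν i * ((1 + μ i) * y i - μ i * S) := by linarith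
      rw [h2]
      exact (hWg i _).symm
    refine ⟨?_, hb⟩
    have hterm : ∀ i, Φ z S i = y i - S / N := by
      intro i
      have hmain : ((1 + μ i) * y i - μ i * S) / (1 + μ i) = y i - ν i * S := by
        rw [div_eq_iff (h1μ i).ne']
        linear_combination S * hνeq i
      simp only [hΦdef, ← hb i, hmain]
      ring
    have : Ψ z S = ∑ i, (y i - S / N) := by
      simp only [hΨdef]
      exact Finset.sum_congr rfl fun i _ => hterm i
    rw [this, Finset.sum_sub_distrib, Finset.sum_const, Finset.card_univ,
      Fintype.card_fin, nsmul_eq_mul, ← hSdef]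
    field_simp
    ring
  constructor
  · -- injectivity
    intro y y' hyy
    set z := Gmap U μ y with hz
    have h1 := hkey y z rfl
    have h2 := hkey y' z hyy.symm
    have hSS : (∑ j, y j) = ∑ j, y' j :=
      (hΨanti z).injective (h1.1.trans h2.1.symm)
    funext i
    have hb1 := h1.2 i
    have hb2 := h2.2 i
    rw [hSS] at hb1
    have : (1 + μ i) * y i = (1 + μ i) * y' i := by linarith
    exact mul_left_cancel₀ (h1μ i).ne' this
  · -- surjectivity
    intro z
    obtain ⟨S, hS⟩ := hΨsurj z 0
    refine ⟨fun i => (g i (z i + ν i * S) + μ i * S) / (1 + μ i), ?_⟩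
    set y : Fin N → ℝ := fun i => (g i (z i + ν i * S) + μ i * S) / (1 + μ i) with hydef
    have hνi : ∀ i, ν i = μ i / (1 + μ i) := fun i => rfl
    have hyi : ∀ i, y i = Φ z S i + S / N := by
      intro i
      simp only [hydef, hΦdef]
      rw [add_div, hνi i]
      ring
    have hsum : (∑ j, y j) = S := by
      rw [Finset.sum_congr rfl fun i _ => hyi i, Finset.sum_add_distrib]
      have : (∑ i, Φ z S i) = Ψ z S := rfl
      rw [this, hS, Finset.sum_const, Finset.card_univ, Fintype.card_fin, nsmul_eq_mul]
      field_simp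
      ring
    have hbi : ∀ i, (1 + μ i) * y i - μ i * (∑ j, y j) = g i (z i + ν i * S) := by
      intro i
      rw [hsum]
      simp only [hydef]
      rw [mul_div_cancel₀ _ (h1μ i).ne']
      ring
    funext i
    rw [hGeq y i, hbi i, hgW i (z i + ν i * S), hsum]
    ring
end

section
/- Suppose that for every i ∈ {1,…,N}, U_i : (0,∞) → ℝ is an increasing, strictly concave, twice continuously differentiable utility function satisfying the Inada conditions U_i'(0+) = ∞ and U_i'(∞) = 0, that there exists ε_i > 0 such that RRA[U_i](x) ≥ ε_i + μ_i/(1+μ_i) for all x > 0, and in addition that for some i ∈ {1,…,N} either λ_i < 1, or there exists R_i ∈ (0,∞) with RRA[U_i](x) ≤ R_i for all x > 0. Then the inverse map G^{-1} : ℝ^N → ℝ^N exists, is continuously differentiable, and is globally Lipschitz. -/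
open Filter

private lemma aux_mvt (V a : ℝ → ℝ) (hV : ∀ w, HasDerivAt V (a w) w) (w w' : ℝ) :
    ∃ ξ, V w' - V w = a ξ * (w' - w) := by
  rcases lt_trichotomy w w' with h | h | h
  · obtain ⟨ξ, -, hξ⟩ := exists_hasDerivAt_eq_slope V a h
      (fun x _ => (hV x).continuousAt.continuousWithinAt) (fun x _ => hV x)
    refine ⟨ξ, ?_⟩
    rw [hξ, div_mul_cancel₀ _ (by linarith : w' - w ≠ 0)]
  · exact ⟨w, by simp [h]⟩
  · obtain ⟨ξ, -, hξ⟩ := exists_hasDerivAt_eq_slope V a h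
      (fun x _ => (hV x).continuousAt.continuousWithinAt) (fun x _ => hV x)
    refine ⟨ξ, ?_⟩
    rw [eq_comm] at hξ
    rw [div_eq_iff (by linarith : w - w' ≠ 0)] at hξ
    linarith [hξ]

private lemma aux_surj (f f' : ℝ → ℝ) (hf : ∀ t, HasDerivAt f (f' t) t) (k : ℝ) (hk : 0 < k)
    (hb : ∀ t, f' t ≤ -k) : Function.Surjective f := by
  have hineq : ∀ s t, s ≤ t → f t ≤ f s - k * (t - s) := by
    intro s t hst
    obtain ⟨ξ, hξ⟩ := aux_mvt f f' hf s t
    nlinarith [hb ξ, sub_nonneg.mpr hst]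
  have hcont : Continuous f := continuous_iff_continuousAt.mpr fun t => (hf t).continuousAt
  apply hcont.surjective'
  · have h1 : Tendsto (fun t : ℝ => f 0 + -(k * t)) atBot atTop :=
      tendsto_atTop_add_const_left _ (f 0)
        (tendsto_neg_atBot_atTop.comp (tendsto_id.const_mul_atBot hk))
    apply tendsto_atTop_mono' _ _ h1
    filter_upwards [eventually_le_atBot (0:ℝ)] with t ht
    have := hineq t 0 ht
    linarith
  · have h1 : Tendsto (fun t : ℝ => f 0 + -(k * t)) atTop atBot :=
      tendsto_atBot_add_const_left _ (f 0)
        (tendsto_neg_atTop_atBot.comp (tendsto_id.const_mul_atTop hk))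
    apply tendsto_atBot_mono' _ _ h1
    filter_upwards [eventually_ge_atTop (0:ℝ)] with t ht
    have := hineq 0 t ht
    linarith

private lemma aux_upper (m ε a₀ Δy ΔS ΔG : ℝ) (hm : 0 ≤ m) (hε : 0 < ε)
    (ha : a₀ ≤ -(m/(1+m) + ε)) (hS : 0 ≤ ΔS)
    (hrel : Δy * ((1+m)*a₀ + m) = m*(1+a₀)*ΔS + ΔG) :
    Δy ≤ (m/(1+m))*ΔS + |ΔG|/((1+m)*ε) := by
  have h1m : (0:ℝ) < 1+m := by linarith
  have hkm : (1+m)*(m/(1+m)) = m := by field_simp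
  have hD : (1+m)*a₀ + m ≤ -((1+m)*ε) := by nlinarith
  have hB : (0:ℝ) < -((1+m)*a₀ + m) := by nlinarith
  have hq : |ΔG|/((1+m)*ε) * ((1+m)*ε) = |ΔG| := by
    field_simp
  have hqn : (0:ℝ) ≤ |ΔG|/((1+m)*ε) := by positivity
  have hkId : m*(1+a₀) = (m/(1+m))*(((1+m)*a₀+m)+1) := by field_simp; ring
  rw [← mul_le_mul_iff_of_pos_right hB]
  have hknn : (0:ℝ) ≤ m/(1+m) := by positivity
  nlinarith [neg_abs_le ΔG, mul_nonneg hS hknn,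
    mul_nonneg hqn (by linarith : (0:ℝ) ≤ -((1+m)*a₀ + m) - (1+m)*ε)]

private lemma aux_upper_gap (m ε R a₀ Δy ΔS ΔG : ℝ) (hm : 0 ≤ m) (hε : 0 < ε) (hR : 0 < R)
    (ha : a₀ ≤ -(m/(1+m) + ε)) (haR : -R ≤ a₀) (hS : 0 ≤ ΔS)
    (hrel : Δy * ((1+m)*a₀ + m) = m*(1+a₀)*ΔS + ΔG) :
    Δy ≤ (m/(1+m) - m/((1+m)^2*R))*ΔS + |ΔG|/((1+m)*ε) := by
  have h1m : (0:ℝ) < 1+m := by linarith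
  have hkm : (1+m)*(m/(1+m)) = m := by field_simp
  have hD : (1+m)*a₀ + m ≤ -((1+m)*ε) := by nlinarith
  have hB : (0:ℝ) < -((1+m)*a₀ + m) := by nlinarith
  have hDlow : -((1+m)*R) ≤ (1+m)*a₀ + m := by nlinarith
  have hγn : (0:ℝ) ≤ m/((1+m)^2*R) := by positivity
  have hγ : m/((1+m)^2*R) * ((1+m)*R) = m/(1+m) := by
    field_simp
  have hq : |ΔG|/((1+m)*ε) * ((1+m)*ε) = |ΔG| := by field_simp
  have hqn : (0:ℝ) ≤ |ΔG|/((1+m)*ε) := by positivity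
  have hkId : m*(1+a₀) = (m/(1+m))*(((1+m)*a₀+m)+1) := by field_simp; ring
  have h5 : (0:ℝ) ≤ m/((1+m)^2*R) * ((1+m)*a₀+m) + m/(1+m) := by
    nlinarith [mul_nonneg hγn (by linarith : (0:ℝ) ≤ ((1+m)*a₀+m) + (1+m)*R)]
  rw [← mul_le_mul_iff_of_pos_right hB]
  nlinarith [neg_abs_le ΔG, mul_nonneg hS h5,
    mul_nonneg hqn (by linarith : (0:ℝ) ≤ -((1+m)*a₀ + m) - (1+m)*ε)]

private lemma aux_abs (m ε a₀ Δy ΔS ΔG : ℝ) (hm : 0 ≤ m) (hε : 0 < ε)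
    (ha : a₀ ≤ -(m/(1+m) + ε))
    (hrel : Δy * ((1+m)*a₀ + m) = m*(1+a₀)*ΔS + ΔG) :
    |Δy| ≤ (m/(1+m))*(1 + 1/((1+m)*ε))*|ΔS| + |ΔG|/((1+m)*ε) := by
  have h1m : (0:ℝ) < 1+m := by linarith
  have hkm : (1+m)*(m/(1+m)) = m := by field_simp
  have hD : (1+m)*a₀ + m ≤ -((1+m)*ε) := by nlinarith
  have hBpos : (0:ℝ) < (1+m)*ε := by positivity
  have hDne : (1+m)*a₀ + m ≠ 0 := by nlinarith
  have hDabs : (1+m)*ε ≤ |(1+m)*a₀ + m| := by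
    rw [abs_of_neg (by nlinarith)]; linarith
  have hΔy : Δy = (m*(1+a₀)/((1+m)*a₀+m))*ΔS + ΔG/((1+m)*a₀+m) := by
    rw [div_mul_eq_mul_div, ← add_div, eq_div_iff hDne]
    linarith [hrel]
  have hfId : m*(1+a₀)/((1+m)*a₀+m) = (m/(1+m))*(1 + 1/((1+m)*a₀+m)) := by
    rw [div_eq_iff hDne, mul_assoc (m/(1+m)), add_mul, one_div_mul_cancel hDne, one_mul,
      div_mul_eq_mul_div, eq_div_iff (ne_of_gt h1m)]
    ring
  have habs1 : |m*(1+a₀)/((1+m)*a₀+m)| ≤ (m/(1+m))*(1 + 1/((1+m)*ε)) := by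
    rw [hfId, abs_mul, abs_of_nonneg (by positivity : (0:ℝ) ≤ m/(1+m))]
    apply mul_le_mul_of_nonneg_left _ (by positivity : (0:ℝ) ≤ m/(1+m))
    calc |1 + 1/((1+m)*a₀+m)| ≤ |(1:ℝ)| + |1/((1+m)*a₀+m)| := abs_add_le _ _
      _ ≤ 1 + 1/((1+m)*ε) := by
          rw [abs_one, abs_div, abs_one]
          have := one_div_le_one_div_of_le hBpos hDabs
          linarith
  have habs2 : |ΔG/((1+m)*a₀+m)| ≤ |ΔG|/((1+m)*ε) := by
    rw [abs_div]
    exact div_le_div_of_nonneg_left (abs_nonneg _) hBpos hDabs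
      |>.trans_eq rfl
  calc |Δy| ≤ |m*(1+a₀)/((1+m)*a₀+m)| * |ΔS| + |ΔG/((1+m)*a₀+m)| := by
        rw [hΔy]
        exact (abs_add_le _ _).trans (by rw [abs_mul])
    _ ≤ (m/(1+m))*(1 + 1/((1+m)*ε))*|ΔS| + |ΔG|/((1+m)*ε) := by
        have := mul_le_mul_of_nonneg_right habs1 (abs_nonneg ΔS)
        linarith

set_option maxHeartbeats 1000000 in
theorem stmt3 (N : ℕ) (hN : 2 ≤ N) (U : Fin N → ℝ → ℝ) (lam μ eps : Fin N → ℝ)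
    (hlam : ∀ i, lam i ∈ Set.Icc (0:ℝ) 1)
    (hμ : ∀ i, μ i = lam i / ((N : ℝ) - 1))
    (hmono : ∀ i, StrictMonoOn (U i) (Set.Ioi 0))
    (hconc : ∀ i, StrictConcaveOn ℝ (Set.Ioi 0) (U i))
    (hsmooth : ∀ i, ContDiffOn ℝ 2 (U i) (Set.Ioi 0))
    (hinada0 : ∀ i, Filter.Tendsto (deriv (U i)) (nhdsWithin 0 (Set.Ioi 0)) Filter.atTop)
    (hinadaInf : ∀ i, Filter.Tendsto (deriv (U i)) Filter.atTop (nhds 0))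
    (heps : ∀ i, 0 < eps i)
    (hRRA : ∀ i, ∀ x > 0, eps i + μ i / (1 + μ i) ≤ RRA (U i) x)
    (hspecial : ∃ i, lam i < 1 ∨ ∃ R : ℝ, 0 < R ∧ ∀ x > 0, RRA (U i) x ≤ R) :
    ∃ Ginv : (Fin N → ℝ) → (Fin N → ℝ),
      Function.LeftInverse Ginv (Gmap U μ) ∧ Function.RightInverse Ginv (Gmap U μ) ∧
      ContDiff ℝ 1 Ginv ∧ ∃ K : NNReal, LipschitzWith K Ginv := by
  classical
  -- basic numeric facts
  have hN1 : (1:ℝ) ≤ (N:ℝ) - 1 := by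
    have : (2:ℝ) ≤ (N:ℝ) := by exact_mod_cast hN
    linarith
  have hNpos : (0:ℝ) < (N:ℝ) := by linarith
  have hμ0 : ∀ i, 0 ≤ μ i := fun i => by
    rw [hμ i]; exact div_nonneg (hlam i).1 (by linarith)
  have h1m : ∀ i, (0:ℝ) < 1 + μ i := fun i => by linarith [hμ0 i]
  have hμlam : ∀ i, μ i * ((N:ℝ)-1) = lam i := fun i => by
    rw [hμ i]; field_simp
  have hfrac : ∀ i, μ i/(1+μ i) ≤ 1/(N:ℝ) := by
    intro i
    rw [div_le_div_iff₀ (h1m i) hNpos]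
    nlinarith [hμlam i, (hlam i).2, hμ0 i]
  have hfrac_lt : ∀ i, lam i < 1 → μ i/(1+μ i) < 1/(N:ℝ) := by
    intro i hi
    rw [div_lt_div_iff₀ (h1m i) hNpos]
    nlinarith [hμlam i, hμ0 i]
  -- derivative of U is positive on (0, ∞)
  have hU'pos : ∀ i, ∀ x : ℝ, 0 < x → 0 < deriv (U i) x := by
    intro i x hx
    have hcpos : (0:ℝ) < eps i + μ i/(1+μ i) :=
      lt_of_lt_of_le (heps i) (le_add_of_nonneg_right (div_nonneg (hμ0 i) (h1m i).le))
    have hdne : ∀ z : ℝ, 0 < z → deriv (U i) z ≠ 0 := by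
      intro z hz h0
      have h1 := hRRA i z hz
      rw [RRA, h0, div_zero] at h1
      linarith
    have hdiff : ∀ z : ℝ, 0 < z → DifferentiableAt ℝ (U i) z := by
      intro z hz
      exact ((hsmooth i).contDiffAt (isOpen_Ioi.mem_nhds hz)).differentiableAt (by norm_num)
    obtain ⟨ξ, hξmem, hξ⟩ := exists_hasDerivAt_eq_slope (U i) (deriv (U i))
      (by linarith : x < x + 1)
      (fun z hz => (hdiff z (by linarith [hz.1] : (0:ℝ) < z)).continuousAt.continuousWithinAt)
      (fun z hz => (hdiff z (by linarith [hz.1] : (0:ℝ) < z)).hasDerivAt)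
    have hξpos : 0 < deriv (U i) ξ := by
      rw [hξ]
      have hUlt := hmono i (Set.mem_Ioi.mpr hx) (Set.mem_Ioi.mpr (by linarith : (0:ℝ) < x+1))
        (by linarith : x < x + 1)
      apply div_pos (by linarith) (by linarith)
    rcases lt_or_gt_of_ne (hdne x hx) with hlt | hgt
    · exfalso
      have hcont : ContinuousOn (deriv (U i)) (Set.Icc x ξ) :=
        ((hsmooth i).continuousOn_deriv_of_isOpen isOpen_Ioi (by norm_num)).mono
          (fun z hz => by simp only [Set.mem_Ioi]; linarith [hz.1])
      have h0mem : (0:ℝ) ∈ Set.Icc (deriv (U i) x) (deriv (U i) ξ) := ⟨hlt.le, hξpos.le⟩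
      obtain ⟨z, hzmem, hz0⟩ := intermediate_value_Icc (le_of_lt hξmem.1) hcont h0mem
      exact hdne z (by linarith [hzmem.1]) hz0
    · exact hgt
  -- logarithmic derivative of V
  have hVexists : ∀ i, ∃ a : ℝ → ℝ, (∀ w, HasDerivAt (Vfun (U i)) (a w) w) ∧
      (∀ w, a w ≤ -(μ i/(1+μ i) + eps i)) ∧
      (∀ R : ℝ, (∀ x > 0, RRA (U i) x ≤ R) → ∀ w, -R ≤ a w) := by
    intro i
    refine ⟨fun w => deriv (deriv (U i)) (Real.exp w) * Real.exp w / deriv (U i) (Real.exp w),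
      ?_, ?_, ?_⟩
    · intro w
      show HasDerivAt (Vfun (U i))
        (deriv (deriv (U i)) (Real.exp w) * Real.exp w / deriv (U i) (Real.exp w)) w
      have hx : (0:ℝ) < Real.exp w := Real.exp_pos w
      have h1 : HasDerivAt (deriv (U i)) (deriv (deriv (U i)) (Real.exp w)) (Real.exp w) := by
        refine (((((hsmooth i).deriv_of_isOpen (m := 1) isOpen_Ioi (by norm_num)).contDiffAt
          (isOpen_Ioi.mem_nhds hx))).differentiableAt one_ne_zero).hasDerivAt
      have h2 := h1.comp w (Real.hasDerivAt_exp w)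
      have h3 := (Real.hasDerivAt_log (ne_of_gt (hU'pos i _ hx))).comp w h2
      have harg : deriv (deriv (U i)) (Real.exp w) * Real.exp w / deriv (U i) (Real.exp w)
          = (deriv (U i) (Real.exp w))⁻¹ *
            (deriv (deriv (U i)) (Real.exp w) * Real.exp w) := by
        rw [div_eq_inv_mul]
      rw [harg]
      exact h3
    · intro w
      have hx : (0:ℝ) < Real.exp w := Real.exp_pos w
      have h1 := hRRA i _ hx
      rw [RRA] at h1
      have hflip : -Real.exp w * deriv (deriv (U i)) (Real.exp w) / deriv (U i) (Real.exp w)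
          = -(deriv (deriv (U i)) (Real.exp w) * Real.exp w / deriv (U i) (Real.exp w)) := by
        ring
      rw [hflip] at h1
      linarith
    · intro R hRb w
      have hx : (0:ℝ) < Real.exp w := Real.exp_pos w
      have h1 := hRb _ hx
      rw [RRA] at h1
      have hflip : -Real.exp w * deriv (deriv (U i)) (Real.exp w) / deriv (U i) (Real.exp w)
          = -(deriv (deriv (U i)) (Real.exp w) * Real.exp w / deriv (U i) (Real.exp w)) := by
        ring
      rw [hflip] at h1
      linarith
  choose a haD haLe haRb using hVexists
  have hDneg : ∀ i w, (1+μ i)*(a i w) + μ i ≤ -((1+μ i)*eps i) := by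
    intro i w
    have h1 := haLe i w
    have h1m' := h1m i
    have hkm : (1+μ i)*(μ i/(1+μ i)) = μ i := by field_simp
    nlinarith [h1m i]
  have hDneg' : ∀ i w, (1+μ i)*(a i w) + μ i < 0 := by
    intro i w
    have := hDneg i w
    nlinarith [h1m i, heps i]
  -- Master mean value relation
  have hmaster : ∀ (i : Fin N) (yv S yv' S' Gv Gv' : ℝ),
      Vfun (U i) ((1+μ i)*yv - μ i*S) + μ i * yv = Gv + μ i * S →
      Vfun (U i) ((1+μ i)*yv' - μ i*S') + μ i * yv' = Gv' + μ i * S' →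
      ∃ w, (yv' - yv) * ((1+μ i)*(a i w) + μ i) = μ i*(1+a i w)*(S' - S) + (Gv' - Gv) := by
    intro i yv S yv' S' Gv Gv' hE hE'
    obtain ⟨ξ, hξ⟩ := aux_mvt (Vfun (U i)) (a i) (haD i)
      ((1+μ i)*yv - μ i*S) ((1+μ i)*yv' - μ i*S')
    exact ⟨ξ, by linear_combination hE' - hE - hξ⟩
  -- choice of κ and δ
  obtain ⟨i0, hsp⟩ := hspecial
  obtain ⟨κ, δ, hδ, hκfrac, hκi0, hκb⟩ :
      ∃ (κ : Fin N → ℝ) (δ : ℝ), 0 < δ ∧ (∀ i, κ i ≤ 1/(N:ℝ)) ∧ κ i0 ≤ 1/(N:ℝ) - δ ∧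
        (∀ (i : Fin N) (w Δy ΔS ΔG : ℝ), 0 ≤ ΔS →
          Δy * ((1+μ i)*(a i w) + μ i) = μ i*(1+a i w)*ΔS + ΔG →
          Δy ≤ κ i * ΔS + |ΔG|/((1+μ i)*eps i)) := by
    by_cases hcase : lam i0 < 1
    · refine ⟨fun i => μ i/(1+μ i), 1/(N:ℝ) - μ i0/(1+μ i0), ?_, hfrac, le_of_eq (by ring), ?_⟩
      · linarith [hfrac_lt i0 hcase]
      · intro i w Δy ΔS ΔG hS hrel
        exact aux_upper (μ i) (eps i) (a i w) Δy ΔS ΔG (hμ0 i) (heps i) (haLe i w) hS hrel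
    · have hl1 : lam i0 = 1 := le_antisymm (hlam i0).2 (not_lt.mp hcase)
      rcases hsp with h | ⟨R, hR0, hRb⟩
      · exact absurd h hcase
      have hμpos : 0 < μ i0 := by
        rw [hμ i0, hl1]
        positivity
      have h1m0 := h1m i0
      refine ⟨Function.update (fun i => μ i/(1+μ i)) i0 (μ i0/(1+μ i0) - μ i0/((1+μ i0)^2*R)),
        μ i0/((1+μ i0)^2*R), by positivity, ?_, ?_, ?_⟩
      · intro i
        rcases eq_or_ne i i0 with rfl | hne
        · rw [Function.update_self]
          have h2 : (0:ℝ) ≤ μ i/((1+μ i)^2*R) := by positivity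
          linarith [hfrac i]
        · rw [Function.update_of_ne hne]; exact hfrac i
      · rw [Function.update_self]; linarith [hfrac i0]
      · intro i w Δy ΔS ΔG hS hrel
        rcases eq_or_ne i i0 with rfl | hne
        · rw [Function.update_self]
          exact aux_upper_gap (μ i) (eps i) R (a i w) Δy ΔS ΔG (hμ0 i) (heps i) hR0
            (haLe i w) (haRb i R hRb w) hS hrel
        · rw [Function.update_of_ne hne]
          exact aux_upper (μ i) (eps i) (a i w) Δy ΔS ΔG (hμ0 i) (heps i) (haLe i w) hS hrel
  have hκsum : ∑ i, κ i ≤ 1 - δ := by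
    have h1 : ∑ i ∈ Finset.univ.erase i0, κ i ≤ ∑ _i ∈ Finset.univ.erase i0, 1/(N:ℝ) :=
      Finset.sum_le_sum (fun i _ => hκfrac i)
    have hcard : (Finset.univ.erase i0).card = N - 1 := by
      rw [Finset.card_erase_of_mem (Finset.mem_univ _), Finset.card_univ, Fintype.card_fin]
    have h2 : ∑ _i ∈ Finset.univ.erase i0, (1/(N:ℝ)) = ((N:ℝ)-1)/(N:ℝ) := by
      rw [Finset.sum_const, hcard, nsmul_eq_mul]
      have hc : ((N - 1 : ℕ) : ℝ) = (N:ℝ) - 1 := by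
        have h1 : 1 ≤ N := by omega
        push_cast [h1]
        ring
      rw [hc]; ring
    have h3 := Finset.add_sum_erase Finset.univ κ (Finset.mem_univ i0)
    have hNne : (N:ℝ) ≠ 0 := by positivity
    have h4 : ((N:ℝ)-1)/(N:ℝ) = 1 - 1/(N:ℝ) := by field_simp
    linarith [hκi0]
  -- key estimate on the aggregate variable
  have hkeyhalf : ∀ (Δ : Fin N → ℝ) (ΔS : ℝ) (ΔG : Fin N → ℝ),
      (∀ i, ∃ w, Δ i * ((1+μ i)*(a i w) + μ i) = μ i*(1+a i w)*ΔS + ΔG i) →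
      ΔS = ∑ i, Δ i → 0 ≤ ΔS →
      ΔS ≤ (∑ i, |ΔG i|/((1+μ i)*eps i)) / δ := by
    intro Δ ΔS ΔG hrel hΔS hS
    have hterm : ∀ i, Δ i ≤ κ i * ΔS + |ΔG i|/((1+μ i)*eps i) := by
      intro i
      obtain ⟨w, hw⟩ := hrel i
      exact hκb i w _ _ _ hS hw
    have hsum : ΔS ≤ (∑ i, κ i) * ΔS + ∑ i, |ΔG i|/((1+μ i)*eps i) := by
      calc ΔS = ∑ i, Δ i := hΔS
        _ ≤ ∑ i, (κ i * ΔS + |ΔG i|/((1+μ i)*eps i)) :=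
            Finset.sum_le_sum (fun i _ => hterm i)
        _ = (∑ i, κ i) * ΔS + ∑ i, |ΔG i|/((1+μ i)*eps i) := by
            rw [Finset.sum_add_distrib, Finset.sum_mul]
    have h2 : (∑ i, κ i) * ΔS ≤ (1 - δ) * ΔS := mul_le_mul_of_nonneg_right hκsum hS
    rw [le_div_iff₀ hδ]
    nlinarith
  have hkey : ∀ (Δ : Fin N → ℝ) (ΔS : ℝ) (ΔG : Fin N → ℝ),
      (∀ i, ∃ w, Δ i * ((1+μ i)*(a i w) + μ i) = μ i*(1+a i w)*ΔS + ΔG i) →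
      ΔS = ∑ i, Δ i →
      |ΔS| ≤ (∑ i, |ΔG i|/((1+μ i)*eps i)) / δ := by
    intro Δ ΔS ΔG hrel hΔS
    rcases le_or_gt 0 ΔS with h | h
    · rw [abs_of_nonneg h]; exact hkeyhalf Δ ΔS ΔG hrel hΔS h
    · rw [abs_of_neg h]
      have hneg := hkeyhalf (fun i => -Δ i) (-ΔS) (fun i => -ΔG i) ?_ ?_ (by linarith)
      · calc -ΔS ≤ (∑ i, |(fun i => -ΔG i) i|/((1+μ i)*eps i)) / δ := hneg
          _ = (∑ i, |ΔG i|/((1+μ i)*eps i)) / δ := by simp [abs_neg]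
      · intro i
        obtain ⟨w, hw⟩ := hrel i
        exact ⟨w, by linarith [hw]⟩
      · rw [hΔS, ← Finset.sum_neg_distrib]
  -- injectivity of Gmap
  have hserase : ∀ (y : Fin N → ℝ) (i : Fin N),
      ∑ j ∈ Finset.univ.erase i, y j = (∑ j, y j) - y i := by
    intro y i
    have := Finset.add_sum_erase Finset.univ y (Finset.mem_univ i)
    linarith
  have hGE : ∀ (y : Fin N → ℝ) (i : Fin N),
      Vfun (U i) ((1+μ i)*(y i) - μ i*(∑ j, y j)) + μ i * y i
        = Gmap U μ y i + μ i * (∑ j, y j) := by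
    intro y i
    simp only [Gmap]
    rw [hserase y i]
    rw [show y i - μ i * ((∑ j, y j) - y i) = (1+μ i)*(y i) - μ i*(∑ j, y j) from by ring]
    ring
  have hinj : Function.Injective (Gmap U μ) := by
    intro y y' hGeq
    have hrel : ∀ i, ∃ w, (y' i - y i) * ((1+μ i)*(a i w) + μ i)
        = μ i*(1+a i w)*((∑ j, y' j) - (∑ j, y j)) + (fun _ : Fin N => (0:ℝ)) i := by
      intro i
      obtain ⟨w, hw⟩ := hmaster i (y i) (∑ j, y j) (y' i) (∑ j, y' j)
        (Gmap U μ y i) (Gmap U μ y' i) (hGE y i) (hGE y' i)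
      rw [hGeq] at hw
      exact ⟨w, by dsimp only; linarith [hw]⟩
    have hS0 : |(∑ j, y' j) - (∑ j, y j)| ≤ 0 := by
      have := hkey (fun i => y' i - y i) ((∑ j, y' j) - (∑ j, y j)) (fun _ => 0) hrel
        (by rw [Finset.sum_sub_distrib])
      simpa using this
    have hSeq : (∑ j, y' j) - (∑ j, y j) = 0 := by
      have := abs_nonneg ((∑ j, y' j) - (∑ j, y j))
      have habs : |(∑ j, y' j) - (∑ j, y j)| = 0 := le_antisymm hS0 this
      exact abs_eq_zero.mp habs
    funext i
    obtain ⟨w, hw⟩ := hrel i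
    rw [hSeq] at hw
    simp only [mul_zero, zero_add] at hw
    have hD := hDneg' i w
    have : y' i - y i = 0 := by
      rcases mul_eq_zero.mp (by linarith [hw] : (y' i - y i) * ((1+μ i)*(a i w) + μ i) = 0)
        with h | h
      · exact h
      · exact absurd h (ne_of_lt hD)
    linarith
  -- surjectivity of Gmap
  have hFc0 : ∀ i, (0:ℝ) ≤ (μ i/(1+μ i))*(1 + 1/((1+μ i)*eps i)) := by
    intro i
    have h1 := h1m i
    have h2 := heps i
    have h3 := hμ0 i
    positivity
  have hsurjG : Function.Surjective (Gmap U μ) := by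
    intro g
    have hχ : ∀ (i : Fin N) (S : ℝ),
        ∃ t, Vfun (U i) ((1+μ i)*t - μ i*S) + μ i * t = g i + μ i * S := by
      intro i S
      have hd : ∀ t : ℝ, HasDerivAt (fun t => Vfun (U i) ((1+μ i)*t - μ i*S) + μ i * t)
          (a i ((1+μ i)*t - μ i*S) * (1+μ i) + μ i * 1) t := by
        intro t
        have h1 : HasDerivAt (fun t : ℝ => (1+μ i)*t - μ i*S) ((1+μ i) * 1) t :=
          ((hasDerivAt_id t).const_mul (1+μ i)).sub_const (μ i*S)
        have h2 := (haD i ((1+μ i)*t - μ i*S)).comp t h1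
        have h3 := h2.add ((hasDerivAt_id t).const_mul (μ i))
        exact h3.congr_deriv (by ring)
      have hble : ∀ t : ℝ, a i ((1+μ i)*t - μ i*S) * (1+μ i) + μ i * 1 ≤ -((1+μ i)*eps i) := by
        intro t
        have := hDneg i ((1+μ i)*t - μ i*S)
        nlinarith [h1m i]
      have hkpos : (0:ℝ) < (1+μ i)*eps i := mul_pos (h1m i) (heps i)
      exact aux_surj _ _ hd ((1+μ i)*eps i) hkpos hble (g i + μ i * S)
    choose ψ hψ using hχ
    -- relations for ψ
    have hrelψ : ∀ (i : Fin N) (S S' : ℝ), ∃ w, (ψ i S' - ψ i S) * ((1+μ i)*(a i w) + μ i)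
        = μ i*(1+a i w)*(S' - S) + 0 := by
      intro i S S'
      obtain ⟨w, hw⟩ := hmaster i (ψ i S) S (ψ i S') S' (g i) (g i) (hψ i S) (hψ i S')
      exact ⟨w, by linarith [hw]⟩
    have hHanti : ∀ S S', S ≤ S' →
        ((∑ i, ψ i S') - S') - ((∑ i, ψ i S) - S) ≤ -δ * (S' - S) := by
      intro S S' hSS
      have hsumb : ∀ i, ψ i S' - ψ i S ≤ κ i * (S' - S) := by
        intro i
        obtain ⟨w, hw⟩ := hrelψ i S S'
        have := hκb i w _ _ _ (by linarith : (0:ℝ) ≤ S' - S) hw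
        simpa using this
      have h1 : (∑ i, ψ i S') - (∑ i, ψ i S) ≤ (∑ i, κ i) * (S'-S) := by
        rw [← Finset.sum_sub_distrib, Finset.sum_mul]
        exact Finset.sum_le_sum (fun i _ => hsumb i)
      nlinarith [mul_le_mul_of_nonneg_right hκsum (sub_nonneg.mpr hSS)]
    have hψlip : ∀ (i : Fin N) (S S' : ℝ),
        |ψ i S' - ψ i S| ≤ (μ i/(1+μ i))*(1 + 1/((1+μ i)*eps i)) * |S' - S| := by
      intro i S S'
      obtain ⟨w, hw⟩ := hrelψ i S S'
      have := aux_abs (μ i) (eps i) (a i w) (ψ i S' - ψ i S) (S' - S) 0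
        (hμ0 i) (heps i) (haLe i w) (by linarith [hw])
      simpa using this
    have hHlip : ∀ S S', |((∑ i, ψ i S') - S') - ((∑ i, ψ i S) - S)|
        ≤ ((∑ i, (μ i/(1+μ i))*(1 + 1/((1+μ i)*eps i))) + 1) * |S' - S| := by
      intro S S'
      have h1 : |(∑ i, ψ i S') - (∑ i, ψ i S)|
          ≤ (∑ i, (μ i/(1+μ i))*(1 + 1/((1+μ i)*eps i))) * |S' - S| := by
        rw [← Finset.sum_sub_distrib, Finset.sum_mul]
        exact (Finset.abs_sum_le_sum_abs _ _).trans
          (Finset.sum_le_sum (fun i _ => hψlip i S S'))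
      have h2 : |((∑ i, ψ i S') - S') - ((∑ i, ψ i S) - S)|
          ≤ |(∑ i, ψ i S') - (∑ i, ψ i S)| + |S' - S| := by
        have := abs_sub ((∑ i, ψ i S') - (∑ i, ψ i S)) (S' - S)
        calc |((∑ i, ψ i S') - S') - ((∑ i, ψ i S) - S)|
            = |((∑ i, ψ i S') - (∑ i, ψ i S)) - (S' - S)| := by ring_nf
          _ ≤ _ := this
      nlinarith
    set CH : ℝ := (∑ i, (μ i/(1+μ i))*(1 + 1/((1+μ i)*eps i))) + 1 with hCH
    have hCH0 : 0 ≤ CH := by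
      rw [hCH]
      have := Finset.sum_nonneg (fun i (_ : i ∈ Finset.univ) => hFc0 i)
      linarith
    have hHcont : Continuous (fun S => (∑ i, ψ i S) - S) := by
      have : LipschitzWith (Real.toNNReal CH) (fun S => (∑ i, ψ i S) - S) := by
        apply LipschitzWith.of_dist_le_mul
        intro S S'
        rw [Real.dist_eq, Real.dist_eq, Real.coe_toNNReal _ hCH0]
        have := hHlip S' S
        simpa [abs_sub_comm] using this
      exact this.continuous
    -- find the root of H
    set H : ℝ → ℝ := fun S => (∑ i, ψ i S) - S with hHdef
    have hH2 : H (max 0 (H 0 / δ)) ≤ 0 := by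
      rcases le_or_gt (H 0) 0 with h | h
      · have hmax : max 0 (H 0 / δ) = 0 :=
          max_eq_left (div_nonpos_of_nonpos_of_nonneg h hδ.le)
        rw [hmax]; exact h
      · have h0S : (0:ℝ) ≤ max 0 (H 0 / δ) := le_max_left _ _
        have hanti := hHanti 0 (max 0 (H 0 / δ)) h0S
        have hgr : H 0 / δ ≤ max 0 (H 0 / δ) := le_max_right _ _
        have hdiv : δ * (H 0 / δ) = H 0 := by field_simp
        nlinarith [mul_le_mul_of_nonneg_left hgr hδ.le]
    have hH1 : 0 ≤ H (min 0 (H 0 / δ)) := by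
      rcases le_or_gt 0 (H 0) with h | h
      · have hmin : min 0 (H 0 / δ) = 0 :=
          min_eq_left (div_nonneg h hδ.le)
        rw [hmin]; exact h
      · have h0S : min 0 (H 0 / δ) ≤ 0 := min_le_left _ _
        have hanti := hHanti (min 0 (H 0 / δ)) 0 h0S
        have hgr : min 0 (H 0 / δ) ≤ H 0 / δ := min_le_right _ _
        have hdiv : δ * (H 0 / δ) = H 0 := by field_simp
        nlinarith [mul_le_mul_of_nonneg_left hgr hδ.le]
    have hminmax : min 0 (H 0 / δ) ≤ max 0 (H 0 / δ) :=
      (min_le_left _ _).trans (le_max_left _ _)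
    obtain ⟨Sst, -, hSst⟩ := intermediate_value_Icc' hminmax hHcont.continuousOn
      (Set.mem_Icc.mpr ⟨hH2, hH1⟩)
    -- build the preimage
    refine ⟨fun i => ψ i Sst, ?_⟩
    have hsum : ∑ j, ψ j Sst = Sst := by
      have : H Sst = 0 := hSst
      rw [hHdef] at this
      dsimp only at this
      linarith
    funext i
    simp only [Gmap]
    have hse : ∑ j ∈ Finset.univ.erase i, ψ j Sst = Sst - ψ i Sst := by
      have h := Finset.add_sum_erase Finset.univ (fun j => ψ j Sst) (Finset.mem_univ i)
      beta_reduce at h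
      linarith [hsum]
    rw [hse]
    rw [show ψ i Sst - μ i * (Sst - ψ i Sst) = (1+μ i)*(ψ i Sst) - μ i*Sst from by ring]
    have := hψ i Sst
    linarith
  -- the global inverse
  set Ginv := Function.invFun (Gmap U μ) with hGinvdef
  have hLI : Function.LeftInverse Ginv (Gmap U μ) := Function.leftInverse_invFun hinj
  have hRI : Function.RightInverse Ginv (Gmap U μ) := Function.rightInverse_invFun hsurjG
  -- Lipschitz bound
  have hCg0 : ∀ i, (0:ℝ) ≤ 1/((1+μ i)*eps i) := by
    intro i
    have h1 := h1m i
    have h2 := heps i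
    positivity
  set Cg : ℝ := ∑ i, 1/((1+μ i)*eps i) with hCgdef
  have hCgnn : 0 ≤ Cg := Finset.sum_nonneg (fun i _ => hCg0 i)
  set CF : ℝ := ∑ i, (μ i/(1+μ i))*(1 + 1/((1+μ i)*eps i)) with hCFdef
  have hCFnn : 0 ≤ CF := Finset.sum_nonneg (fun i _ => hFc0 i)
  set Kr : ℝ := CF * (Cg/δ) + Cg with hKrdef
  have hKr0 : 0 ≤ Kr := by
    rw [hKrdef]
    have : 0 ≤ Cg/δ := div_nonneg hCgnn hδ.le
    nlinarith
  have hdistb : ∀ gx gy, dist (Ginv gx) (Ginv gy) ≤ Kr * dist gx gy := by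
    intro gx gy
    set y := Ginv gx with hy
    set y' := Ginv gy with hy'
    have hGy : Gmap U μ y = gx := hRI gx
    have hGy' : Gmap U μ y' = gy := hRI gy
    have hrel : ∀ i, ∃ w, (y' i - y i) * ((1+μ i)*(a i w) + μ i)
        = μ i*(1+a i w)*((∑ j, y' j) - (∑ j, y j)) + (fun i => gy i - gx i) i := by
      intro i
      obtain ⟨w, hw⟩ := hmaster i (y i) (∑ j, y j) (y' i) (∑ j, y' j)
        (Gmap U μ y i) (Gmap U μ y' i) (hGE y i) (hGE y' i)
      rw [hGy, hGy'] at hw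
      exact ⟨w, by dsimp only; linarith [hw]⟩
    have hGGle : ∀ i, |gy i - gx i| ≤ dist gx gy := by
      intro i
      have h1 : |gy i - gx i| = dist (gy i) (gx i) := by rw [Real.dist_eq]
      rw [h1, dist_comm]
      exact dist_le_pi_dist gx gy i
    have hQle : (∑ i, |gy i - gx i|/((1+μ i)*eps i)) ≤ Cg * dist gx gy := by
      rw [hCgdef, Finset.sum_mul]
      apply Finset.sum_le_sum
      intro i _
      rw [div_eq_mul_one_div, mul_comm]
      exact mul_le_mul_of_nonneg_left (hGGle i) (hCg0 i)
    have hSbound : |(∑ j, y' j) - (∑ j, y j)| ≤ (Cg/δ) * dist gx gy := by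
      have h1 := hkey (fun i => y' i - y i) ((∑ j, y' j) - (∑ j, y j))
        (fun i => gy i - gx i) hrel (by rw [Finset.sum_sub_distrib])
      calc |(∑ j, y' j) - (∑ j, y j)| ≤ (∑ i, |gy i - gx i|/((1+μ i)*eps i)) / δ := h1
        _ ≤ (Cg * dist gx gy)/δ := (div_le_div_iff_of_pos_right hδ).mpr hQle
        _ = (Cg/δ) * dist gx gy := by ring
    -- coordinatewise bound
    have hcoord : ∀ i, |y' i - y i| ≤ Kr * dist gx gy := by
      intro i
      obtain ⟨w, hw⟩ := hrel i
      beta_reduce at hw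
      have habs := aux_abs (μ i) (eps i) (a i w) (y' i - y i)
        ((∑ j, y' j) - (∑ j, y j)) (gy i - gx i)
        (hμ0 i) (heps i) (haLe i w) hw
      have hF1 : (μ i/(1+μ i))*(1 + 1/((1+μ i)*eps i)) ≤ CF := by
        rw [hCFdef]
        exact Finset.single_le_sum (fun j (_ : j ∈ Finset.univ) => hFc0 j) (Finset.mem_univ i)
      have hF2 : |gy i - gx i|/((1+μ i)*eps i) ≤ Cg * dist gx gy := by
        calc |gy i - gx i|/((1+μ i)*eps i)
            ≤ ∑ j, |gy j - gx j|/((1+μ j)*eps j) :=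
              Finset.single_le_sum (f := fun j => |gy j - gx j|/((1+μ j)*eps j))
                (fun j _ => div_nonneg (abs_nonneg _) (mul_pos (h1m j) (heps j)).le)
                (Finset.mem_univ i)
          _ ≤ Cg * dist gx gy := hQle
      have hterm1 : (μ i/(1+μ i))*(1 + 1/((1+μ i)*eps i)) * |(∑ j, y' j) - (∑ j, y j)|
          ≤ CF * ((Cg/δ) * dist gx gy) := by
        apply mul_le_mul hF1 hSbound (abs_nonneg _) hCFnn
      rw [hKrdef]
      linarith [habs, hterm1, hF2]
    rw [dist_pi_le_iff (by positivity : (0:ℝ) ≤ Kr * dist gx gy)]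
    intro i
    rw [Real.dist_eq, abs_sub_comm]
    exact hcoord i
  -- smoothness of Vfun
  have hVcd : ∀ i, ContDiff ℝ 1 (Vfun (U i)) := by
    intro i
    rw [contDiff_iff_contDiffAt]
    intro w
    have hx : (0:ℝ) < Real.exp w := Real.exp_pos w
    have h1 : ContDiffAt ℝ 1 (deriv (U i)) (Real.exp w) :=
      ((hsmooth i).deriv_of_isOpen isOpen_Ioi (by norm_num)).contDiffAt
        (isOpen_Ioi.mem_nhds hx)
    have h2 : ContDiffAt ℝ 1 Real.exp w := Real.contDiff_exp.contDiffAt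
    have h3 : ContDiffAt ℝ 1 Real.log (deriv (U i) (Real.exp w)) :=
      Real.contDiffAt_log.mpr (ne_of_gt (hU'pos i _ hx))
    have h4 := h3.comp w (h1.comp w h2)
    exact h4
  -- smoothness of Gmap
  have hGcd : ContDiff ℝ 1 (Gmap U μ) := by
    rw [contDiff_pi]
    intro i
    have hsumCD : ContDiff ℝ 1 (fun y : Fin N → ℝ => ∑ j ∈ Finset.univ.erase i, y j) := by
      apply ContDiff.sum
      intro j _
      exact (ContinuousLinearMap.proj j : (Fin N → ℝ) →L[ℝ] ℝ).contDiff
    have hproj : ContDiff ℝ 1 (fun y : Fin N → ℝ => y i) :=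
      (ContinuousLinearMap.proj i : (Fin N → ℝ) →L[ℝ] ℝ).contDiff
    have hinner : ContDiff ℝ 1
        (fun y : Fin N → ℝ => y i - μ i * ∑ j ∈ Finset.univ.erase i, y j) :=
      hproj.sub (contDiff_const.mul hsumCD)
    have hmul : ContDiff ℝ 1 (fun y : Fin N → ℝ => μ i * ∑ j ∈ Finset.univ.erase i, y j) :=
      contDiff_const.mul hsumCD
    have := ((hVcd i).comp hinner).sub hmul
    simpa [Gmap, Function.comp] using this
  -- the inverse is continuously differentiable
  have hCD : ContDiff ℝ 1 Ginv := by
    rw [contDiff_iff_contDiffAt]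
    intro g0
    obtain ⟨y, rfl⟩ := hsurjG g0
    set L : Fin N → (Fin N → ℝ) →L[ℝ] ℝ :=
      fun i => ∑ j ∈ Finset.univ.erase i, (ContinuousLinearMap.proj j : (Fin N → ℝ) →L[ℝ] ℝ)
      with hLdef
    set P : Fin N → (Fin N → ℝ) →L[ℝ] ℝ :=
      fun i => (ContinuousLinearMap.proj i : (Fin N → ℝ) →L[ℝ] ℝ) - μ i • L i with hPdef
    have hLapp : ∀ i u, L i u = ∑ j ∈ Finset.univ.erase i, u j := by
      intro i u
      rw [hLdef]
      simp
    have hPapp : ∀ i u, P i u = u i - μ i * ∑ j ∈ Finset.univ.erase i, u j := by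
      intro i u
      rw [hPdef]
      simp [hLapp]
    set Amap : (Fin N → ℝ) →L[ℝ] (Fin N → ℝ) :=
      ContinuousLinearMap.pi (fun i =>
        a i (y i - μ i * ∑ j ∈ Finset.univ.erase i, y j) • P i - μ i • L i) with hAdef
    have hAapp : ∀ u i, Amap u i
        = a i (y i - μ i * ∑ j ∈ Finset.univ.erase i, y j) * (P i u) - μ i * (L i u) := by
      intro u i
      rw [hAdef]
      simp [ContinuousLinearMap.pi_apply]
    have hAder : HasFDerivAt (Gmap U μ) Amap y := by
      rw [hAdef]
      apply hasFDerivAt_pi''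
      intro i
      rw [ContinuousLinearMap.proj_pi]
      have hPder : HasFDerivAt
          (fun u : Fin N → ℝ => u i - μ i * ∑ j ∈ Finset.univ.erase i, u j) (P i) y := by
        have h := (P i).hasFDerivAt (x := y)
        have hco : ⇑(P i) = fun u : Fin N → ℝ => u i - μ i * ∑ j ∈ Finset.univ.erase i, u j :=
          funext (hPapp i)
        rwa [hco] at h
      have hLder : HasFDerivAt
          (fun u : Fin N → ℝ => μ i * ∑ j ∈ Finset.univ.erase i, u j) (μ i • L i) y := by
        have h := (μ i • L i).hasFDerivAt (x := y)
        have hco : ⇑(μ i • L i)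
            = fun u : Fin N → ℝ => μ i * ∑ j ∈ Finset.univ.erase i, u j := by
          funext u
          simp [hLapp]
        rwa [hco] at h
      have hVder := (haD i (y i - μ i * ∑ j ∈ Finset.univ.erase i, y j)).comp_hasFDerivAt y hPder
      have htot := hVder.sub hLder
      exact htot
    have hAker : ∀ u, Amap u = 0 → u = 0 := by
      intro u hu
      have hrelu : ∀ i, ∃ w, u i * ((1+μ i)*(a i w) + μ i)
          = μ i*(1+a i w)*(∑ j, u j) + (fun _ : Fin N => (0:ℝ)) i := by
        intro i
        refine ⟨y i - μ i * ∑ j ∈ Finset.univ.erase i, y j, ?_⟩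
        have h0 : Amap u i = 0 := by rw [hu]; rfl
        rw [hAapp, hPapp, hLapp, hserase u i] at h0
        dsimp only
        linear_combination h0
      have hS0 := hkey u (∑ j, u j) (fun _ => 0) hrelu rfl
      have hT : (∑ j, u j) = 0 := by
        have h1 : |∑ j, u j| ≤ 0 := by simpa using hS0
        exact abs_eq_zero.mp (le_antisymm h1 (abs_nonneg _))
      funext i
      obtain ⟨w, hw⟩ := hrelu i
      rw [hT] at hw
      simp only [mul_zero, zero_add] at hw
      have hD := hDneg' i w
      rcases mul_eq_zero.mp (by linarith [hw] : u i * ((1+μ i)*(a i w) + μ i) = 0) with h | h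
      · exact h
      · exact absurd h (ne_of_lt hD)
    have hAinj : Function.Injective Amap := by
      intro u v huv
      have h : Amap (u - v) = 0 := by rw [map_sub, huv, sub_self]
      exact sub_eq_zero.mp (hAker (u - v) h)
    have hAsurj : Function.Surjective Amap :=
      (LinearMap.injective_iff_surjective
        (f := (Amap : (Fin N → ℝ) →ₗ[ℝ] (Fin N → ℝ)))).mp hAinj
    set eA : (Fin N → ℝ) ≃ₗ[ℝ] (Fin N → ℝ) :=
      LinearEquiv.ofBijective (Amap : (Fin N → ℝ) →ₗ[ℝ] (Fin N → ℝ)) ⟨hAinj, hAsurj⟩ with heA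
    set E : (Fin N → ℝ) ≃L[ℝ] (Fin N → ℝ) := eA.toContinuousLinearEquiv with hE
    have hEA : (E : (Fin N → ℝ) →L[ℝ] (Fin N → ℝ)) = Amap := by
      ext u
      rfl
    have hAder' : HasFDerivAt (Gmap U μ) (E : (Fin N → ℝ) →L[ℝ] (Fin N → ℝ)) y := by
      rw [hEA]; exact hAder
    have hGAt : ContDiffAt ℝ 1 (Gmap U μ) y := hGcd.contDiffAt
    have hlocCD := hGAt.to_localInverse (f' := E) hAder' one_ne_zero
    have hev := (hGAt.hasStrictFDerivAt' hAder' one_ne_zero).eventually_right_inverse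
    apply hlocCD.congr_of_eventuallyEq
    filter_upwards [hev] with x hx
    conv_lhs => rw [← hx]
    exact hLI _
  exact ⟨Ginv, hLI, hRI, hCD, ⟨Real.toNNReal Kr,
    LipschitzWith.of_dist_le_mul fun gx gy => by
      rw [Real.coe_toNNReal _ hKr0]; exact hdistb gx gy⟩⟩
end

section
/- Let N ≥ 2, μ_i ∈ [0, 1/(N−1)] and ε_i > 0 for i ∈ {1,…,N}, and assume μ_k < 1/(N−1) for at least one k. Then there is a constant C > 0, depending only on N, (μ_i) and (ε_i), such that for any real numbers v_1,…,v_N satisfying −v_i ≥ ε_i + μ_i/(1+μ_i) for all i, the N×N matrix M with diagonal entries M_{ii} = v_i and off-diagonal entries M_{ij} = −v_i·μ_i − μ_i (for j ≠ i) is invertible and ‖M^{-1}‖_∞ ≤ C. -/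
private lemma alg1 (x y : ℝ) (hx : x ≠ 0) (hy : 1 - y ≠ 0) :
    x⁻¹ + y * ((1 - y) * x)⁻¹ = ((1 - y) * x)⁻¹ := by
  field_simp
  ring

private lemma alg2 (x y z w : ℝ) (hx : x ≠ 0) (hw : 1 - w ≠ 0) (h : x * y = z) :
    x * (x⁻¹ + y * ((1 - w) * x)⁻¹) - z * ((1 - w) * x)⁻¹ = 1 := by
  field_simp
  linear_combination h

private lemma alg3 (x y z t : ℝ) (h : x * y = z) :
    x * (0 + y * t) - z * t = 0 := by
  linear_combination t * h

/-- The operator norm on `N×N` real matrices induced by the `∞`-norm on `ℝ^N`: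
`‖M‖_∞ = max_i Σ_j |M i j|`. -/
noncomputable def infNorm {N : ℕ} (M : Matrix (Fin N) (Fin N) ℝ) : ℝ :=
  ⨆ i, ∑ j, |M i j|

set_option maxHeartbeats 1000000 in
theorem stmt4 (N : ℕ) (hN : 2 ≤ N) (μ ε : Fin N → ℝ)
    (hμ : ∀ i, μ i ∈ Set.Icc (0:ℝ) (1 / ((N : ℝ) - 1)))
    (hε : ∀ i, 0 < ε i)
    (hk : ∃ k, μ k < 1 / ((N : ℝ) - 1)) :
    ∃ C > (0:ℝ), ∀ v : Fin N → ℝ, (∀ i, ε i + μ i / (1 + μ i) ≤ -v i) →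
      IsUnit (Matrix.of fun i j => if i = j then v i else -(v i) * μ i - μ i) ∧
      infNorm (Matrix.of fun i j => if i = j then v i else -(v i) * μ i - μ i)⁻¹ ≤ C := by
  haveI : Nonempty (Fin N) := ⟨⟨0, by omega⟩⟩
  obtain ⟨k, hk⟩ := hk
  have hN1 : (1:ℝ) ≤ (N:ℝ) - 1 := by
    have : (2:ℝ) ≤ (N:ℝ) := by exact_mod_cast hN
    linarith
  have hNpos : (0:ℝ) < N := by linarith
  have hμ0 : ∀ i, 0 ≤ μ i := fun i => (hμ i).1
  have h1μ : ∀ i, (0:ℝ) < 1 + μ i := fun i => by have := hμ0 i; linarith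
  set a : Fin N → ℝ := fun i => μ i / (1 + μ i) with ha_def
  have ha_eq : ∀ i, a i * (1 + μ i) = μ i := fun i =>
    div_mul_cancel₀ (μ i) (h1μ i).ne'
  have ha_nonneg : ∀ i, 0 ≤ a i := fun i => div_nonneg (hμ0 i) (h1μ i).le
  have hμN : ∀ i, μ i * ((N:ℝ) - 1) ≤ 1 := by
    intro i
    have h1 : μ i ≤ 1 / ((N:ℝ)-1) := (hμ i).2
    rw [le_div_iff₀ (by linarith)] at h1
    linarith
  have ha_le : ∀ i, a i ≤ 1 / N := by
    intro i
    rw [ha_def, div_le_div_iff₀ (h1μ i) hNpos]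
    nlinarith [hμN i, hμ0 i]
  have ha_lt : a k < 1 / N := by
    rw [ha_def, div_lt_div_iff₀ (h1μ k) hNpos]
    have h1 : μ k * ((N:ℝ) - 1) < 1 := by
      rw [lt_div_iff₀ (by linarith)] at hk; linarith
    nlinarith [hμ0 k]
  have hδ : 0 < 1 - ∑ i, a i := by
    have h1 : ∑ i, a i < ∑ _i : Fin N, 1/(N:ℝ) :=
      Finset.sum_lt_sum (fun i _ => ha_le i) ⟨k, Finset.mem_univ k, ha_lt⟩
    have h2 : ∑ _i : Fin N, 1/(N:ℝ) = 1 := by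
      rw [Finset.sum_const, Finset.card_univ, Fintype.card_fin, nsmul_eq_mul]
      field_simp
    linarith
  set δ : ℝ := 1 - ∑ i, a i with hδ_def
  set B : Fin N → ℝ := fun i => μ i * (ε i + a i + 1) / ((1 + μ i) * ε i) with hB_def
  have hB_nonneg : ∀ i, 0 ≤ B i := fun i => by
    apply div_nonneg
    · have := ha_nonneg i; have := hε i; nlinarith [hμ0 i]
    · exact mul_nonneg (h1μ i).le (hε i).le
  set S : ℝ := ∑ j, 1 / ε j with hS_def
  have hS_pos : 0 < S := Finset.sum_pos (fun j _ => one_div_pos.mpr (hε j)) Finset.univ_nonempty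
  have hSB : 0 ≤ ∑ i, B i := Finset.sum_nonneg fun i _ => hB_nonneg i
  have hCpos : 0 < S * (1 + (∑ i, B i) / δ) := by
    have h0 : 0 ≤ (∑ i, B i) / δ := div_nonneg hSB hδ.le
    nlinarith
  refine ⟨S * (1 + (∑ i, B i) / δ), hCpos, fun v hv => ?_⟩
  set M : Matrix (Fin N) (Fin N) ℝ :=
    Matrix.of fun i j => if i = j then v i else -(v i) * μ i - μ i with hM_def
  set d : Fin N → ℝ := fun i => (1 + μ i) * v i + μ i with hd_def
  set c : Fin N → ℝ := fun i => μ i * (v i + 1) with hc_def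
  have hd_le : ∀ i, d i ≤ -ε i := by
    intro i
    have h1 := hv i
    have h2 := ha_eq i
    have h3 := mul_le_mul_of_nonneg_left h1 (h1μ i).le
    have h4 : 0 ≤ μ i * ε i := mul_nonneg (hμ0 i) (hε i).le
    simp only [hd_def]
    nlinarith [hμ0 i, hε i]
  have hd_neg : ∀ i, d i < 0 := fun i => lt_of_le_of_lt (hd_le i) (by linarith [hε i])
  have hd_ne : ∀ i, d i ≠ 0 := fun i => (hd_neg i).ne
  set f : Fin N → ℝ := fun i => c i / d i with hf_def
  have hdf : ∀ i, d i * f i = c i := fun i => by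
    show d i * (c i / d i) = c i
    rw [mul_comm, div_mul_cancel₀ _ (hd_ne i)]
  have hf_le : ∀ i, f i ≤ a i := by
    intro i
    have key : f i - a i = μ i / (d i * (1 + μ i)) := by
      show c i / d i - μ i / (1 + μ i) = μ i / (d i * (1 + μ i))
      rw [div_sub_div _ _ (hd_ne i) (h1μ i).ne', div_eq_div_iff
        (mul_ne_zero (hd_ne i) (h1μ i).ne') (mul_ne_zero (hd_ne i) (h1μ i).ne')]
      simp only [hd_def, hc_def]
      ring
    have hden : d i * (1 + μ i) < 0 := mul_neg_of_neg_of_pos (hd_neg i) (h1μ i)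
    have h0 : μ i / (d i * (1 + μ i)) ≤ 0 :=
      div_nonpos_iff.mpr (Or.inl ⟨hμ0 i, hden.le⟩)
    linarith
  set s : ℝ := ∑ i, f i with hs_def
  have hs_le : s ≤ ∑ i, a i := Finset.sum_le_sum fun i _ => hf_le i
  have h1s : δ ≤ 1 - s := by rw [hδ_def]; linarith
  have h1s_pos : 0 < 1 - s := lt_of_lt_of_le hδ h1s
  have h1s_ne : (1 : ℝ) - s ≠ 0 := h1s_pos.ne'
  -- bound |f i| ≤ B i
  have hfB : ∀ i, |f i| ≤ B i := by
    intro i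
    have hu : ε i + a i ≤ -v i := hv i
    have hnd : -(d i) = (1 + μ i) * ((-v i) - a i) := by
      simp only [hd_def]
      linear_combination ha_eq i
    have hkey : μ i * ((-v i) + 1) * ((1 + μ i) * ε i)
        ≤ μ i * (ε i + a i + 1) * ((1 + μ i) * ((-v i) - a i)) := by
      nlinarith [mul_nonneg (mul_nonneg (mul_nonneg (hμ0 i) (h1μ i).le)
        (by linarith [ha_nonneg i] : (0:ℝ) ≤ 1 + a i))
        (by linarith : (0:ℝ) ≤ -v i - ε i - a i)]
    have hmain : μ i * ((-v i) + 1) ≤ B i * (-(d i)) := by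
      rw [hnd, hB_def]
      rw [div_mul_eq_mul_div, le_div_iff₀ (mul_pos (h1μ i) (hε i))]
      linarith [hkey]
    have hcb : |c i| ≤ μ i * ((-v i) + 1) := by
      rw [hc_def, abs_mul, abs_of_nonneg (hμ0 i)]
      have hvneg : v i < 0 := by nlinarith [hε i, ha_nonneg i]
      have : |v i + 1| ≤ (-v i) + 1 := by
        rw [abs_le]; constructor <;> linarith
      nlinarith [hμ0 i]
    have hfd : |f i| = |c i| / (-(d i)) := by
      rw [hf_def, abs_div, abs_of_neg (hd_neg i)]
    rw [hfd, div_le_iff₀ (by linarith [hd_neg i])]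
    calc |c i| ≤ μ i * ((-v i) + 1) := hcb
      _ ≤ B i * (-(d i)) := hmain
  -- the explicit inverse
  set W : Matrix (Fin N) (Fin N) ℝ :=
    Matrix.of fun i j => (if i = j then (d i)⁻¹ else 0) + f i * ((1 - s) * d j)⁻¹ with hW_def
  have hW_apply : ∀ i j, W i j = (if i = j then (d i)⁻¹ else 0) + f i * ((1 - s) * d j)⁻¹ :=
    fun i j => rfl
  have hM_apply : ∀ i j, M i j = (if i = j then d i else 0) - c i := by
    intro i j
    by_cases h : i = j <;> simp [hM_def, h, hd_def, hc_def] <;> ring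
  have hsumW : ∀ j, ∑ l, W l j = ((1 - s) * d j)⁻¹ := by
    intro j
    simp only [hW_apply]
    rw [Finset.sum_add_distrib, Finset.sum_ite_eq' Finset.univ j (fun l => (d l)⁻¹),
      ← Finset.sum_mul, ← hs_def]
    simp only [Finset.mem_univ, if_true]
    exact alg1 (d j) s (hd_ne j) h1s_ne
  have hMW : M * W = 1 := by
    ext i j
    rw [Matrix.mul_apply, Matrix.one_apply]
    have step : ∀ l, M i l * W l j
        = (if i = l then d i * W l j else 0) - c i * W l j := by
      intro l
      rw [hM_apply]
      by_cases h : i = l <;> simp [h] <;> ring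
    rw [Finset.sum_congr rfl (fun l _ => step l), Finset.sum_sub_distrib]
    have e1 : ∑ l, (if i = l then d i * W l j else 0) = d i * W i j := by
      simp
    have e2 : ∑ l, c i * W l j = c i * ((1 - s) * d j)⁻¹ := by
      rw [← Finset.mul_sum, hsumW j]
    rw [e1, e2, hW_apply]
    have hdfi := hdf i
    by_cases h : i = j
    · subst h
      rw [if_pos rfl, if_pos rfl]
      exact alg2 (d i) (f i) (c i) s (hd_ne i) h1s_ne hdfi
    · rw [if_neg h, if_neg h]
      exact alg3 (d i) (f i) (c i) _ hdfi
  have hWM : W * M = 1 := mul_eq_one_comm.mp hMW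
  have hUnit : IsUnit M := ⟨⟨M, W, hMW, hWM⟩, rfl⟩
  refine ⟨hUnit, ?_⟩
  rw [Matrix.inv_eq_right_inv hMW]
  clear_value W s f c d M S B δ a
  -- norm bound
  have hrow : ∀ i, ∑ j, |W i j| ≤ S * (1 + (∑ i, B i) / δ) := by
    intro i
    have hterm : ∀ j, |W i j| ≤ (if i = j then 1 / ε i else 0) + B i * (δ⁻¹ * (ε j)⁻¹) := by
      intro j
      rw [hW_apply]
      refine le_trans (abs_add_le _ _) (add_le_add ?_ ?_)
      · by_cases h : i = j
        · subst h
          rw [if_pos rfl, if_pos rfl, abs_inv, abs_of_neg (hd_neg i), one_div]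
          apply inv_anti₀ (hε i)
          linarith [hd_le i]
        · rw [if_neg h, if_neg h, abs_zero]
      · rw [abs_mul, abs_inv, abs_mul, abs_of_pos h1s_pos, abs_of_neg (hd_neg j)]
        have hdj : 0 < -d j := by linarith [hd_neg j]
        have hb1 : ((1 - s) * -d j)⁻¹ ≤ δ⁻¹ * (ε j)⁻¹ := by
          rw [← mul_inv]
          apply inv_anti₀ (mul_pos hδ (hε j))
          exact mul_le_mul h1s (by linarith [hd_le j]) (hε j).le (by linarith)
        exact mul_le_mul (hfB i) hb1 (inv_nonneg.mpr (mul_pos h1s_pos hdj).le) (hB_nonneg i)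
    calc ∑ j, |W i j| ≤ ∑ j, ((if i = j then 1 / ε i else 0) + B i * (δ⁻¹ * (ε j)⁻¹)) :=
          Finset.sum_le_sum fun j _ => hterm j
      _ = 1 / ε i + B i * δ⁻¹ * S := by
          rw [Finset.sum_add_distrib, Finset.sum_ite_eq Finset.univ i (fun _ => 1 / ε i)]
          simp only [Finset.mem_univ, if_true]
          rw [hS_def, Finset.mul_sum]
          congr 1
          apply Finset.sum_congr rfl
          intro j _
          rw [one_div]
          ring
      _ ≤ S + (∑ i, B i) * δ⁻¹ * S := by
          have h1 : 1 / ε i ≤ S := by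
            rw [hS_def]
            exact Finset.single_le_sum (fun j _ => (one_div_pos.mpr (hε j)).le) (Finset.mem_univ i)
          have h2 : B i ≤ ∑ i, B i :=
            Finset.single_le_sum (fun j _ => hB_nonneg j) (Finset.mem_univ i)
          have h3 : B i * δ⁻¹ * S ≤ (∑ i, B i) * δ⁻¹ * S := by
            apply mul_le_mul_of_nonneg_right _ hS_pos.le
            apply mul_le_mul_of_nonneg_right h2 (inv_nonneg.mpr hδ.le)
          linarith
      _ = S * (1 + (∑ i, B i) / δ) := by
          rw [div_eq_mul_inv]
          ring
  exact ciSup_le hrow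
end

section
/- Let N ≥ 2, μ_i ∈ [0, 1/(N−1)] and ε_i > 0 for i ∈ {1,…,N}, fix an index i₀ and a constant R ≥ ε_{i₀} + μ_{i₀}/(1+μ_{i₀}). Then there is a constant C > 0, depending only on N, (μ_i), (ε_i) and R, such that for any real numbers v_1,…,v_N satisfying ε_{i₀} + μ_{i₀}/(1+μ_{i₀}) ≤ −v_{i₀} ≤ R and −v_j ≥ ε_j + μ_j/(1+μ_j) for all j ≠ i₀, the N×N matrix M with diagonal entries M_{ii} = v_i and off-diagonal entries M_{ij} = −v_i·μ_i − μ_i (for j ≠ i) is invertible and ‖M^{-1}‖_∞ ≤ C. -/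
private lemma aux1 (dk u s : ℝ) (hd : dk ≠ 0) (ht : 1 - s ≠ 0) :
    dk * (1/dk + (u/dk)/((1-s)*dk)) - u * (1/dk + s/((1-s)*dk)) = 1 := by
  field_simp
  ring

private lemma aux2 (di dk u s : ℝ) (hdi : di ≠ 0) (hdk : dk ≠ 0) (ht : 1 - s ≠ 0) :
    di * (0/dk + (u/di)/((1-s)*dk)) - u * (1/dk + s/((1-s)*dk)) = 0 := by
  field_simp
  ring

set_option maxHeartbeats 2000000 in
theorem stmt5 (N : ℕ) (hN : 2 ≤ N) (μ ε : Fin N → ℝ)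
    (hμ : ∀ i, μ i ∈ Set.Icc (0:ℝ) (1 / ((N : ℝ) - 1)))
    (hε : ∀ i, 0 < ε i)
    (i₀ : Fin N) (R : ℝ) (hR : ε i₀ + μ i₀ / (1 + μ i₀) ≤ R) :
    ∃ C > (0:ℝ), ∀ v : Fin N → ℝ,
      (ε i₀ + μ i₀ / (1 + μ i₀) ≤ -v i₀ ∧ -v i₀ ≤ R) →
      (∀ j, j ≠ i₀ → ε j + μ j / (1 + μ j) ≤ -v j) →
      IsUnit (Matrix.of fun i j => if i = j then v i else -(v i) * μ i - μ i) ∧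
      infNorm (Matrix.of fun i j => if i = j then v i else -(v i) * μ i - μ i)⁻¹ ≤ C := by
  have hN0 : 0 < N := by omega
  have hNR : (2:ℝ) ≤ (N:ℝ) := by exact_mod_cast hN
  have hNR0 : (0:ℝ) < (N:ℝ) := by linarith
  have hμ0 : ∀ i, 0 ≤ μ i := fun i => (hμ i).1
  have h1μ : ∀ i, (0:ℝ) < 1 + μ i := fun i => by linarith [hμ0 i]
  have hμN : ∀ i, μ i / (1 + μ i) ≤ 1 / N := by
    intro i
    rw [div_le_div_iff₀ (h1μ i) hNR0]
    have h2 := (hμ i).2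
    have hN1 : (0:ℝ) < (N:ℝ) - 1 := by linarith
    have h3 : μ i * ((N:ℝ) - 1) ≤ 1 := by
      have := (le_div_iff₀ hN1).mp h2
      linarith [this]
    nlinarith
  have hμdivnn : ∀ i, 0 ≤ μ i / (1 + μ i) := fun i => div_nonneg (hμ0 i) (h1μ i).le
  have hR0 : 0 < R := lt_of_lt_of_le (by have := hε i₀; have := hμdivnn i₀; linarith) hR
  set E : ℝ := ∑ k, 1 / ε k with hE
  have hEpos : 0 < E :=
    Finset.sum_pos (fun k _ => by have := hε k; positivity) ⟨i₀, Finset.mem_univ i₀⟩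
  have hεE : ∀ i, 1 / ε i ≤ E := fun i =>
    Finset.single_le_sum (f := fun k => 1 / ε k)
      (fun k _ => by have := hε k; positivity) (Finset.mem_univ i)
  set δ : ℝ := 1/N - μ i₀/(1+μ i₀) + μ i₀/((1+μ i₀)^2*R) with hδdef
  have hδ0 : 0 < δ := by
    rcases eq_or_lt_of_le (hμ0 i₀) with h | h
    · have hz : δ = 1/N := by rw [hδdef, ← h]; norm_num
      rw [hz]; exact div_pos one_pos hNR0
    · have h1 : 0 ≤ 1/(N:ℝ) - μ i₀/(1+μ i₀) := by linarith [hμN i₀]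
      have h2 : 0 < μ i₀/((1+μ i₀)^2*R) := by
        have := h1μ i₀; positivity
      rw [hδdef]; linarith
  refine ⟨E * (1 + (1+E)/δ), by positivity, ?_⟩
  intro v hv0 hvj
  set M : Matrix (Fin N) (Fin N) ℝ :=
    Matrix.of fun i j => if i = j then v i else -(v i) * μ i - μ i with hM
  set d : Fin N → ℝ := fun i => v i * (1 + μ i) + μ i with hd
  set u : Fin N → ℝ := fun i => μ i * (v i + 1) with hu
  have hvle : ∀ i, ε i + μ i/(1+μ i) ≤ -v i := by
    intro i
    by_cases h : i = i₀
    · subst h; exact hv0.1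
    · exact hvj i h
  have hdneg : ∀ i, d i ≤ -(ε i * (1 + μ i)) := by
    intro i
    have h1 := h1μ i
    have h2 : (ε i + μ i/(1+μ i)) * (1+μ i) ≤ -v i * (1+μ i) :=
      mul_le_mul_of_nonneg_right (hvle i) h1.le
    have h3 : μ i/(1+μ i) * (1+μ i) = μ i := div_mul_cancel₀ _ h1.ne'
    show v i * (1 + μ i) + μ i ≤ -(ε i * (1 + μ i))
    nlinarith
  have hdlt : ∀ i, d i < 0 := fun i =>
    lt_of_le_of_lt (hdneg i) (by nlinarith [hε i, h1μ i])
  have hdne : ∀ i, d i ≠ 0 := fun i => (hdlt i).ne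
  have hdabs : ∀ i, ε i ≤ -d i := by
    intro i
    have := hdneg i
    nlinarith [hε i, hμ0 i]
  have hposd : ∀ i, 0 < (1 + μ i) * (-d i) :=
    fun i => mul_pos (h1μ i) (neg_pos.mpr (hdlt i))
  have hflip : ∀ i, μ i / ((1+μ i) * d i) = -(μ i / ((1+μ i) * (-d i))) := by
    intro i
    rw [← div_neg]
    congr 1
    ring
  set f : Fin N → ℝ := fun i => u i / d i with hf
  set s : ℝ := ∑ i, f i with hs
  have hfeq : ∀ i, f i = μ i/(1+μ i) + μ i/((1+μ i) * d i) := by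
    intro i
    show u i / d i = _
    rw [div_add_div _ _ (h1μ i).ne' (mul_ne_zero (h1μ i).ne' (hdne i)),
      div_eq_div_iff (hdne i) (mul_ne_zero (h1μ i).ne' (mul_ne_zero (h1μ i).ne' (hdne i)))]
    show u i * _ = _ * (v i * (1 + μ i) + μ i)
    simp only [hu, hd]
    ring
  -- upper bound on s
  have hd0R : -d i₀ ≤ (1+μ i₀) * R := by
    have h1 := hv0.2
    have h2 := hμ0 i₀
    have h3 := h1μ i₀
    show -(v i₀ * (1 + μ i₀) + μ i₀) ≤ (1+μ i₀) * R
    nlinarith [mul_le_mul_of_nonneg_right h1 h3.le]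
  have hs_le : s ≤ 1 - δ := by
    have hfg : ∀ i, f i ≤ 1/N + (if i = i₀ then
        (μ i₀/(1+μ i₀) - μ i₀/((1+μ i₀)^2*R) - 1/N) else 0) := by
      intro i
      rw [hfeq i]
      by_cases h : i = i₀
      · subst h
        rw [if_pos rfl]
        have hA : μ i / ((1+μ i) * ((1+μ i) * R)) ≤ μ i / ((1+μ i) * (-d i)) :=
          div_le_div_of_nonneg_left (hμ0 i) (hposd i)
            (mul_le_mul_of_nonneg_left hd0R (h1μ i).le)
        have hkey := neg_le_neg hA
        rw [← hflip i, show (1+μ i) * ((1+μ i) * R) = (1+μ i)^2 * R from by ring] at hkey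
        linarith
      · simp only [if_neg h]
        have h2 : μ i/((1+μ i) * d i) ≤ 0 :=
          div_nonpos_of_nonneg_of_nonpos (hμ0 i) (by nlinarith [h1μ i, hdlt i])
        linarith [hμN i]
    calc s ≤ ∑ i, (1/(N:ℝ) + (if i = i₀ then
        (μ i₀/(1+μ i₀) - μ i₀/((1+μ i₀)^2*R) - 1/N) else 0)) :=
          Finset.sum_le_sum (fun i _ => hfg i)
      _ = 1 - δ := by
          rw [Finset.sum_add_distrib, Finset.sum_const, Finset.sum_ite_eq' Finset.univ i₀,
            if_pos (Finset.mem_univ i₀), Finset.card_univ, Fintype.card_fin, nsmul_eq_mul,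
            hδdef]
          have hne1 : ((N:ℝ)) ≠ 0 := hNR0.ne'
          have hne2 := (h1μ i₀).ne'; have hne3 := hR0.ne'
          field_simp
          ring
  have h1s : δ ≤ 1 - s := by linarith
  have h1s0 : 0 < 1 - s := lt_of_lt_of_le hδ0 h1s
  have h1sne : (1:ℝ) - s ≠ 0 := h1s0.ne'
  have hfbd : ∀ i, |f i| ≤ 1 + E := by
    intro i
    rw [hfeq i, abs_le]
    have h1 := h1μ i
    have h2 := hμ0 i
    have h3 : μ i/((1+μ i) * d i) ≤ 0 :=
      div_nonpos_of_nonneg_of_nonpos h2 (by nlinarith [hdlt i])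
    have hμle1 : μ i ≤ 1 := by
      have h2' := (hμ i).2
      have hN1 : (1:ℝ) ≤ (N:ℝ) - 1 := by linarith
      have : 1/((N:ℝ)-1) ≤ 1 := by
        rw [div_le_one (by linarith)]
        linarith
      linarith
    have h5 : μ i / ((1+μ i) * (-d i)) ≤ 1/ε i :=
      div_le_div₀ zero_le_one hμle1 (hε i)
        (le_trans (hdabs i) (le_mul_of_one_le_left (by linarith [hdlt i]) (by linarith)))
    have h4 : -(1/ε i) ≤ μ i/((1+μ i) * d i) := by
      rw [hflip i]
      exact neg_le_neg h5
    constructor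
    · have := hμdivnn i
      have := hεE i
      linarith
    · have h6 : μ i/(1+μ i) ≤ 1 := by
        rw [div_le_one h1]; linarith
      linarith [hEpos]
  -- the explicit inverse
  set B : Matrix (Fin N) (Fin N) ℝ :=
    Matrix.of (fun i k => (if i = k then 1 else 0)/d k + f i/((1-s)*d k)) with hB
  have hMij : ∀ i j, M i j = (if i = j then d i else 0) - u i := by
    intro i j
    by_cases h : i = j
    · simp only [hM, Matrix.of_apply, if_pos h, hd, hu]
      subst h; ring
    · simp only [hM, Matrix.of_apply, if_neg h, hu]
      ring
  have hMB : M * B = 1 := by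
    ext i k
    have hsum : (M * B) i k = d i * B i k - u i * (1/d k + s/((1-s)*d k)) := by
      have e1 : ∀ j, M i j * B j k = (if i = j then d i else 0) * B j k - u i * B j k := by
        intro j; rw [hMij, sub_mul]
      rw [Matrix.mul_apply]
      simp only [e1]
      rw [Finset.sum_sub_distrib]
      congr 1
      · rw [Finset.sum_eq_single i]
        · simp
        · intro b _ hb
          simp [Ne.symm hb]
        · intro h; exact absurd (Finset.mem_univ i) h
      · rw [← Finset.mul_sum]
        congr 1
        simp only [hB, Matrix.of_apply]
        rw [Finset.sum_add_distrib, ← Finset.sum_div, ← Finset.sum_div, ← hs,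
          Finset.sum_ite_eq' Finset.univ k, if_pos (Finset.mem_univ k)]
    rw [hsum]
    by_cases h : i = k
    · rw [h, Matrix.one_apply_eq]
      have hBkk : B k k = 1/d k + (u k/d k)/((1-s)*d k) := by
        simp [hB, hf]
      rw [hBkk]
      exact aux1 (d k) (u k) s (hdne k) h1sne
    · rw [Matrix.one_apply_ne h]
      have hBik : B i k = 0/d k + (u i/d i)/((1-s)*d k) := by
        simp [hB, hf, if_neg h]
      rw [hBik]
      exact aux2 (d i) (d k) (u i) s (hdne i) (hdne k) h1sne
  have hIsUnit : IsUnit M := by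
    have hInvertible : Invertible M := invertibleOfRightInverse M B hMB
    exact isUnit_of_invertible M
  have hMinv : M⁻¹ = B := Matrix.inv_eq_right_inv hMB
  refine ⟨hIsUnit, ?_⟩
  rw [hMinv]
  -- bound the norm of B
  have hrow : ∀ i, ∑ k, |B i k| ≤ E * (1 + (1+E)/δ) := by
    intro i
    have hent : ∀ k, |B i k| ≤ (1/ε k) * (1 + (1+E)/δ) := by
      intro k
      simp only [hB, Matrix.of_apply]
      have h1 : |(if i = k then (1:ℝ) else 0)/d k| ≤ 1/ε k := by
        rw [abs_div]
        apply div_le_div₀ (by positivity) _ (hε k) _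
        · split <;> simp
        · rw [abs_of_neg (hdlt k)]; exact hdabs k
      have h2 : |f i/((1-s)*d k)| ≤ (1/ε k) * ((1+E)/δ) := by
        rw [abs_div, abs_mul, abs_of_pos h1s0, abs_of_neg (hdlt k)]
        have h2' : |f i| / ((1-s)*(-d k)) ≤ (1+E)/(δ * ε k) :=
          div_le_div₀ (by linarith [hEpos]) (hfbd i) (mul_pos hδ0 (hε k))
            (mul_le_mul h1s (hdabs k) (hε k).le (by linarith))
        have heq : (1+E)/(δ * ε k) = (1/ε k) * ((1+E)/δ) := by
          rw [div_mul_div_comm, one_mul, mul_comm (ε k) δ]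
        rw [← heq]
        exact h2'
      calc |(if i = k then (1:ℝ) else 0)/d k + f i/((1-s)*d k)|
          ≤ |(if i = k then (1:ℝ) else 0)/d k| + |f i/((1-s)*d k)| := abs_add_le _ _
        _ ≤ 1/ε k + (1/ε k) * ((1+E)/δ) := add_le_add h1 h2
        _ = (1/ε k) * (1 + (1+E)/δ) := by ring
    calc ∑ k, |B i k| ≤ ∑ k, (1/ε k) * (1 + (1+E)/δ) := Finset.sum_le_sum fun k _ => hent k
      _ = E * (1 + (1+E)/δ) := by rw [← Finset.sum_mul]
  haveI : Nonempty (Fin N) := ⟨i₀⟩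
  unfold infNorm
  exact ciSup_le hrow
end

section
/- A continuously differentiable map f : ℝ^N → ℝ^N is a diffeomorphism (a bijection with differentiable inverse) if and only if f is proper and its Jacobian matrix Jf(x) is invertible at every point x ∈ ℝ^N. -/
open Set Filter Topology Function

section Aux

variable {E : Type*} [NormedAddCommGroup E] [NormedSpace ℝ E] {f : E → E}

/-- Pasting two continuous functions on adjacent intervals. -/
lemma pasteIcc {X : Type*} [TopologicalSpace X] {γ β : ℝ → X} {u v : ℝ}
    (hγ : ContinuousOn γ (Icc 0 u)) (hβ : ContinuousOn β (Icc u v)) (heq : γ u = β u) :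
    ContinuousOn (fun s => if s ≤ u then γ s else β s) (Icc 0 v) := by
  apply ContinuousOn.if
  · rintro a ⟨-, ha⟩
    have h1 : frontier {a : ℝ | a ≤ u} ⊆ {a : ℝ | a = u} :=
      frontier_le_subset_eq continuous_id continuous_const
    have h2 : a = u := h1 ha
    simp only [h2, heq]
  · refine hγ.mono ?_
    rintro a ⟨ha1, ha2⟩
    rw [show {a : ℝ | a ≤ u} = Iic u from rfl, closure_Iic] at ha2
    exact ⟨ha1.1, ha2⟩
  · refine hβ.mono ?_
    rintro a ⟨ha1, ha2⟩
    have h3 : {a : ℝ | ¬ a ≤ u} = {a : ℝ | u < a} := by ext a; simp [not_le]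
    rw [h3] at ha2
    have h4 : closure {a : ℝ | u < a} ⊆ {a : ℝ | u ≤ a} :=
      closure_lt_subset_le continuous_const continuous_id
    exact ⟨h4 ha2, ha1.2⟩

/-- Path lifting for a proper local homeomorphism. -/
lemma liftPath (hcont : Continuous f)
    (hch : ∀ x : E, ∃ e : OpenPartialHomeomorph E E, x ∈ e.source ∧ ⇑e = f)
    (hproper : IsProperMap f) (σ : ℝ → E) (hσ : Continuous σ) (x₀ : E) (h0 : f x₀ = σ 0) :
    ∃ γ : ℝ → E, ContinuousOn γ (Icc 0 1) ∧ γ 0 = x₀ ∧ ∀ t ∈ Icc (0:ℝ) 1, f (γ t) = σ t := by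
  set S : Set ℝ := {t : ℝ | t ∈ Icc (0:ℝ) 1 ∧ ∃ γ : ℝ → E, ContinuousOn γ (Icc 0 t) ∧
      γ 0 = x₀ ∧ ∀ s ∈ Icc (0:ℝ) t, f (γ s) = σ s} with hSdef
  have hS0 : (0:ℝ) ∈ S := by
    refine ⟨⟨le_refl 0, zero_le_one⟩, fun _ => x₀, continuousOn_const, rfl, ?_⟩
    intro s hs
    have : s = 0 := le_antisymm hs.2 hs.1
    rw [this, h0]
  have hSne : S.Nonempty := ⟨0, hS0⟩
  have hbdd : BddAbove S := ⟨1, fun t ht => ht.1.2⟩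
  set T := sSup S with hTdef
  have hT0 : 0 ≤ T := le_csSup hbdd hS0
  have hT1 : T ≤ 1 := csSup_le hSne fun t ht => ht.1.2
  -- a sequence in S converging to T
  have hu : ∀ n : ℕ, ∃ t ∈ S, T - 1/(n+1) < t := by
    intro n
    refine exists_lt_of_lt_csSup hSne ?_
    have : (0:ℝ) < 1/(n+1) := by positivity
    linarith
  choose u huS hult using hu
  have hu0 : ∀ n, 0 ≤ u n := fun n => (huS n).1.1
  have hu1 : ∀ n, u n ≤ 1 := fun n => (huS n).1.2
  have huT : ∀ n, u n ≤ T := fun n => le_csSup hbdd (huS n)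
  have hulim : Tendsto u atTop (𝓝 T) := by
    have h1 : Tendsto (fun n : ℕ => T - 1/(n+1)) atTop (𝓝 T) := by
      have := tendsto_one_div_add_atTop_nhds_zero_nat (𝕜 := ℝ)
      simpa using tendsto_const_nhds.sub this
    exact tendsto_of_tendsto_of_tendsto_of_le_of_le h1 tendsto_const_nhds
      (fun n => (hult n).le) huT
  -- the lifts
  have hlift : ∀ n, ∃ γ : ℝ → E, ContinuousOn γ (Icc 0 (u n)) ∧ γ 0 = x₀ ∧
      ∀ s ∈ Icc (0:ℝ) (u n), f (γ s) = σ s := fun n => (huS n).2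
  choose γs hγcont hγ0 hγlift using hlift
  -- compactness
  have hK : IsCompact (f ⁻¹' (σ '' Icc 0 1)) :=
    hproper.isCompact_preimage (isCompact_Icc.image hσ)
  set x : ℕ → E := fun n => γs n (u n) with hxdef
  have hxK : ∀ n, x n ∈ f ⁻¹' (σ '' Icc 0 1) := by
    intro n
    have : f (x n) = σ (u n) := hγlift n (u n) ⟨hu0 n, le_refl _⟩
    rw [mem_preimage, this]
    exact ⟨u n, ⟨hu0 n, hu1 n⟩, rfl⟩
  obtain ⟨xs, hxsK, φ, hφ, hconv⟩ := hK.tendsto_subseq hxK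
  have hfxs : f xs = σ T := by
    have h1 : Tendsto (fun n => f (x (φ n))) atTop (𝓝 (f xs)) :=
      ((hcont.tendsto xs).comp hconv)
    have h2 : Tendsto (fun n => f (x (φ n))) atTop (𝓝 (σ T)) := by
      have he : (fun n => f (x (φ n))) = fun n => σ (u (φ n)) :=
        funext fun n => hγlift (φ n) (u (φ n)) ⟨hu0 _, le_refl _⟩
      rw [he]
      exact (hσ.tendsto T).comp (hulim.comp hφ.tendsto_atTop)
    exact tendsto_nhds_unique h1 h2
  obtain ⟨e, hxe, hecoe⟩ := hch xs
  have hTtar : T ∈ σ ⁻¹' e.target := by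
    have : e xs ∈ e.target := e.map_source hxe
    rw [hecoe] at this
    rw [mem_preimage, ← hfxs]
    exact this
  obtain ⟨δ, hδ, hball⟩ := Metric.isOpen_iff.mp (e.open_target.preimage hσ) T hTtar
  have evsrc : ∀ᶠ n in atTop, x (φ n) ∈ e.source :=
    hconv.eventually_mem (e.open_source.mem_nhds hxe)
  have evu : ∀ᶠ n in atTop, T - δ/2 < u (φ n) :=
    (hulim.comp hφ.tendsto_atTop).eventually (eventually_gt_nhds (by linarith))
  obtain ⟨n, hsrc, hgt⟩ := (evsrc.and evu).exists
  set w := u (φ n) with hwdef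
  have hw0 : 0 ≤ w := hu0 _
  have hwT : w ≤ T := huT _
  set γ := γs (φ n) with hγdef
  set v := min 1 (T + δ/2) with hvdef
  have hTv : T ≤ v := le_min hT1 (by linarith)
  have hwv : w ≤ v := hwT.trans hTv
  have hv0 : 0 ≤ v := hw0.trans hwv
  have hsub : Icc w v ⊆ σ ⁻¹' e.target := by
    intro s hs
    apply hball
    rw [Metric.mem_ball, Real.dist_eq, abs_lt]
    have hsv : s ≤ T + δ/2 := hs.2.trans (min_le_right _ _)
    have hs1 := hs.1
    exact ⟨by linarith, by linarith⟩
  set β : ℝ → E := fun s => e.symm (σ s) with hβdef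
  have hβcont : ContinuousOn β (Icc w v) :=
    e.continuousOn_symm.comp hσ.continuousOn fun s hs => hsub hs
  have hmatch : γ w = β w := by
    have h1 : f (γ w) = σ w := hγlift (φ n) w ⟨hw0, le_refl _⟩
    have h2 : e.symm (e (γ w)) = γ w := e.left_inv hsrc
    show γ w = e.symm (σ w)
    rw [← h1, ← congrFun hecoe (γ w), h2]
  set γ' : ℝ → E := fun s => if s ≤ w then γ s else β s with hγ'def
  have hvS : v ∈ S := by
    refine ⟨⟨hv0, min_le_left _ _⟩, γ', pasteIcc (hγcont (φ n)) hβcont hmatch, ?_, ?_⟩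
    · show (if (0:ℝ) ≤ w then γ 0 else β 0) = x₀
      rw [if_pos hw0]; exact hγ0 (φ n)
    · intro s hs
      by_cases hsw : s ≤ w
      · show f (if s ≤ w then γ s else β s) = σ s
        rw [if_pos hsw]; exact hγlift (φ n) s ⟨hs.1, hsw⟩
      · show f (if s ≤ w then γ s else β s) = σ s
        rw [if_neg hsw]
        have htar : σ s ∈ e.target := hsub ⟨(not_le.mp hsw).le, hs.2⟩
        show f (e.symm (σ s)) = σ s
        rw [← congrFun hecoe (e.symm (σ s))]
        exact e.right_inv htar
  have hvT : v ≤ T := le_csSup hbdd hvS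
  have hT : T = 1 := by
    by_contra hne
    have hTlt : T < 1 := lt_of_le_of_ne hT1 hne
    have : T < v := lt_min hTlt (by linarith)
    linarith
  have hv1 : v = 1 := le_antisymm (min_le_left _ _) (hT ▸ hTv)
  rw [hv1] at hvS
  exact hvS.2

end Aux

section Aux2

variable {E : Type*} [NormedAddCommGroup E] [NormedSpace ℝ E] {f : E → E}

lemma liftFamily (hcont : Continuous f)
    (hch : ∀ x : E, ∃ e : OpenPartialHomeomorph E E, x ∈ e.source ∧ ⇑e = f)
    (hproper : IsProperMap f) (σ : E → ℝ → E)
    (hσ : Continuous (fun p : E × ℝ => σ p.1 p.2)) (x₀ : E) (h0 : ∀ y, σ y 0 = f x₀)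
    (liftPath : ∀ τ : ℝ → E, Continuous τ → f x₀ = τ 0 →
      ∃ γ : ℝ → E, ContinuousOn γ (Icc 0 1) ∧ γ 0 = x₀ ∧ ∀ t ∈ Icc (0:ℝ) 1, f (γ t) = τ t)
    (y₀ : E) :
    ∃ V : Set E, IsOpen V ∧ y₀ ∈ V ∧ ∃ G : E → ℝ → E,
      ContinuousOn (fun p : E × ℝ => G p.1 p.2) (V ×ˢ Icc 0 1) ∧
      (∀ y ∈ V, G y 0 = x₀) ∧ ∀ y ∈ V, ∀ s ∈ Icc (0:ℝ) 1, f (G y s) = σ y s := by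
  have hsep : IsSeparatedMap f := T2Space.isSeparatedMap f
  have hinj : IsLocallyInjective f := by
    intro x
    obtain ⟨e, hx, he⟩ := hch x
    exact ⟨e.source, e.open_source, hx, he ▸ e.injOn⟩
  set S : Set ℝ := {t : ℝ | t ∈ Icc (0:ℝ) 1 ∧ ∃ V : Set E, ∃ G : E → ℝ → E,
      IsOpen V ∧ y₀ ∈ V ∧ ContinuousOn (fun p : E × ℝ => G p.1 p.2) (V ×ˢ Icc 0 t) ∧
      (∀ y ∈ V, G y 0 = x₀) ∧ ∀ y ∈ V, ∀ s ∈ Icc (0:ℝ) t, f (G y s) = σ y s} with hSdef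
  have hS0 : (0:ℝ) ∈ S := by
    refine ⟨⟨le_refl 0, zero_le_one⟩, univ, fun _ _ => x₀, isOpen_univ, mem_univ _,
      continuousOn_const, fun _ _ => rfl, ?_⟩
    intro y _ s hs
    have : s = 0 := le_antisymm hs.2 hs.1
    rw [this, h0 y]
  have hSne : S.Nonempty := ⟨0, hS0⟩
  have hbdd : BddAbove S := ⟨1, fun t ht => ht.1.2⟩
  set T := sSup S with hTdef
  have hT0 : 0 ≤ T := le_csSup hbdd hS0
  have hT1 : T ≤ 1 := csSup_le hSne fun t ht => ht.1.2
  have hTmem : T ∈ Icc (0:ℝ) 1 := ⟨hT0, hT1⟩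
  -- the 1-D lift along y₀
  have hσ0 : Continuous (fun s => σ y₀ s) :=
    hσ.comp (continuous_const.prodMk continuous_id)
  obtain ⟨gam, hgamcont, hgam0, hgamlift⟩ := liftPath (fun s => σ y₀ s) hσ0 (h0 y₀).symm
  -- chart at gam T
  obtain ⟨e, hxe, hecoe⟩ := hch (gam T)
  have hfT : f (gam T) = σ y₀ T := hgamlift T hTmem
  have htar : (y₀, T) ∈ (fun p : E × ℝ => σ p.1 p.2) ⁻¹' e.target := by
    have : e (gam T) ∈ e.target := e.map_source hxe
    rw [hecoe] at this
    rw [mem_preimage]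
    show σ y₀ T ∈ e.target
    rw [← hfT]; exact this
  obtain ⟨ρ, hρ, hballp⟩ := Metric.isOpen_iff.mp (e.open_target.preimage hσ) _ htar
  -- eventually gam s ∈ e.source for s near T within Icc 0 1
  have hev : ∀ᶠ s in 𝓝[Icc (0:ℝ) 1] T, gam s ∈ e.source :=
    (hgamcont T hTmem).eventually_mem (e.open_source.mem_nhds hxe)
  obtain ⟨ε, hε, hibs⟩ := Metric.mem_nhdsWithin_iff.mp hev
  set η := min ε (ρ/2) with hηdef
  have hη : 0 < η := lt_min hε (by linarith)
  obtain ⟨w, hwS, hwgt⟩ := exists_lt_of_lt_csSup hSne (show T - η < T by linarith)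
  have hwT : w ≤ T := le_csSup hbdd hwS
  have hw0 : 0 ≤ w := hwS.1.1
  have hw1 : w ≤ 1 := hwS.1.2
  have hgamw_src : gam w ∈ e.source := by
    apply hibs
    constructor
    · rw [Metric.mem_ball, Real.dist_eq, abs_lt]
      have : η ≤ ε := min_le_left _ _
      exact ⟨by linarith, by linarith⟩
    · exact ⟨hw0, hw1⟩
  obtain ⟨⟨hwIcc, V, G, hVopen, hy₀V, hGcont, hG0, hGlift⟩⟩ : w ∈ S ∧ True := ⟨hwS, trivial⟩
  -- G y₀ agrees with gam on [0, w]
  have hGy₀cont : ContinuousOn (fun s => G y₀ s) (Icc 0 w) := by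
    have := hGcont.comp (Continuous.continuousOn (continuous_const.prodMk continuous_id
      (f := fun s : ℝ => y₀)))
      (fun s hs => by exact ⟨hy₀V, hs⟩)
    exact this
  have hEq : EqOn (fun s => G y₀ s) gam (Icc 0 w) := by
    apply hsep.eqOn_of_comp_eqOn hinj isPreconnected_Icc hGy₀cont
      (hgamcont.mono (Icc_subset_Icc le_rfl hw1))
    · intro s hs
      show f (G y₀ s) = f (gam s)
      rw [hGlift y₀ hy₀V s hs, hgamlift s ⟨hs.1, hs.2.trans hw1⟩]
    · exact ⟨le_refl 0, hw0⟩
    · show G y₀ 0 = gam 0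
      rw [hG0 y₀ hy₀V, hgam0]
  have hGw_src : G y₀ w ∈ e.source := by
    have : G y₀ w = gam w := hEq ⟨hw0, le_refl w⟩
    rw [this]; exact hgamw_src
  -- neighborhood where G y w stays in the chart source
  have hGwcont : ContinuousOn (fun y => G y w) V := by
    exact hGcont.comp (Continuous.continuousOn (continuous_id.prodMk continuous_const))
      (fun y hy => ⟨hy, ⟨hw0, le_refl w⟩⟩)
  have hGwAt : ContinuousAt (fun y => G y w) y₀ :=
    hGwcont.continuousAt (hVopen.mem_nhds hy₀V)
  have hevy : ∀ᶠ y in 𝓝 y₀, G y w ∈ e.source :=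
    hGwAt.eventually_mem (e.open_source.mem_nhds hGw_src)
  obtain ⟨V₁, hV₁sub, hV₁open, hy₀V₁⟩ := mem_nhds_iff.mp hevy
  set V₂ := V ∩ V₁ ∩ Metric.ball y₀ ρ with hV₂def
  have hV₂open : IsOpen V₂ := ((hVopen.inter hV₁open).inter Metric.isOpen_ball)
  have hy₀V₂ : y₀ ∈ V₂ := ⟨⟨hy₀V, hy₀V₁⟩, Metric.mem_ball_self hρ⟩
  set v := min 1 (T + ρ/2) with hvdef
  have hTv : T ≤ v := le_min hT1 (by linarith)
  have hwv : w ≤ v := hwT.trans hTv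
  have hv0 : 0 ≤ v := hw0.trans hwv
  have htar2 : ∀ y ∈ V₂, ∀ s ∈ Icc w v, σ y s ∈ e.target := by
    intro y hy s hs
    have hsv : s ≤ T + ρ/2 := hs.2.trans (min_le_right _ _)
    have hsw : w ≤ s := hs.1
    have hηρ : η ≤ ρ/2 := min_le_right _ _
    have : (y, s) ∈ (fun p : E × ℝ => σ p.1 p.2) ⁻¹' e.target := by
      apply hballp
      rw [Metric.mem_ball, Prod.dist_eq]
      apply max_lt
      · exact Metric.mem_ball.mp hy.2
      · rw [Real.dist_eq, abs_lt]
        exact ⟨by linarith, by linarith⟩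
    exact this
  set G' : E → ℝ → E := fun y s => if s ≤ w then G y s else e.symm (σ y s) with hG'def
  have hG'cont : ContinuousOn (fun p : E × ℝ => G' p.1 p.2) (V₂ ×ˢ Icc 0 v) := by
    apply ContinuousOn.if
    · rintro ⟨y, s⟩ ⟨hp, hfr⟩
      have hfr' : s = w := by
        have h1 : frontier {p : E × ℝ | p.2 ≤ w} ⊆ {p : E × ℝ | p.2 = w} :=
          frontier_le_subset_eq continuous_snd continuous_const
        exact h1 hfr
      simp only
      rw [hfr']
      have hsrc : G y w ∈ e.source := hV₁sub hp.1.1.2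
      have hfGw : f (G y w) = σ y w := hGlift y hp.1.1.1 w ⟨hw0, le_refl w⟩
      rw [← hfGw, ← congrFun hecoe (G y w), e.left_inv hsrc]
    · refine hGcont.mono ?_
      rintro ⟨y, s⟩ ⟨hp, hcl⟩
      rw [show {p : E × ℝ | p.2 ≤ w} = (Prod.snd) ⁻¹' (Iic w) from rfl] at hcl
      have : closure ((Prod.snd : E × ℝ → ℝ) ⁻¹' Iic w) ⊆ (Prod.snd) ⁻¹' (Iic w) :=
        (IsClosed.preimage continuous_snd isClosed_Iic).closure_subset
      have hsw : s ≤ w := this hcl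
      exact ⟨hp.1.1.1, ⟨hp.2.1, hsw⟩⟩
    · have : ContinuousOn (fun p : E × ℝ => e.symm (σ p.1 p.2))
          ((V₂ ×ˢ Icc 0 v) ∩ {p : E × ℝ | w ≤ p.2}) := by
        apply e.continuousOn_symm.comp hσ.continuousOn
        rintro ⟨y, s⟩ ⟨hp, hws⟩
        exact htar2 y hp.1 s ⟨hws, hp.2.2⟩
      refine this.mono ?_
      rintro ⟨y, s⟩ ⟨hp, hcl⟩
      have h3 : {p : E × ℝ | ¬ p.2 ≤ w} = {p : E × ℝ | w < p.2} := by
        ext p; simp [not_le]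
      rw [h3] at hcl
      have h4 : closure {p : E × ℝ | w < p.2} ⊆ {p : E × ℝ | w ≤ p.2} :=
        closure_lt_subset_le continuous_const continuous_snd
      exact ⟨hp, h4 hcl⟩
  have hvS : v ∈ S := by
    refine ⟨⟨hv0, min_le_left _ _⟩, V₂, G', hV₂open, hy₀V₂, hG'cont, ?_, ?_⟩
    · intro y hy
      show (if (0:ℝ) ≤ w then G y 0 else _) = x₀
      rw [if_pos hw0]
      exact hG0 y hy.1.1
    · intro y hy s hs
      by_cases hsw : s ≤ w
      · show f (if s ≤ w then G y s else _) = σ y s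
        rw [if_pos hsw]
        exact hGlift y hy.1.1 s ⟨hs.1, hsw⟩
      · show f (if s ≤ w then G y s else e.symm (σ y s)) = σ y s
        rw [if_neg hsw]
        have htars : σ y s ∈ e.target := htar2 y hy s ⟨(not_le.mp hsw).le, hs.2⟩
        rw [← congrFun hecoe (e.symm (σ y s))]
        exact e.right_inv htars
  have hvT : v ≤ T := le_csSup hbdd hvS
  have hT : T = 1 := by
    by_contra hne
    have hTlt : T < 1 := lt_of_le_of_ne hT1 hne
    have : T < v := lt_min hTlt (by linarith)
    linarith
  have hv1 : v = 1 := le_antisymm (min_le_left _ _) (hT ▸ hTv)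
  rw [hv1] at hvS
  obtain ⟨-, V', G'', h1, h2, h3, h4, h5⟩ := hvS
  exact ⟨V', h1, h2, G'', h3, h4, h5⟩

end Aux2

section Aux3

variable {E : Type*} [NormedAddCommGroup E] [NormedSpace ℝ E] {f : E → E}


lemma globalInverse (hcont : Continuous f)
    (hch : ∀ x : E, ∃ e : OpenPartialHomeomorph E E, x ∈ e.source ∧ ⇑e = f)
    (hproper : IsProperMap f) :
    ∃ g : E → E, Continuous g ∧ (∀ y, f (g y) = y) ∧ ∀ x, g (f x) = x := by
  have hsep : IsSeparatedMap f := T2Space.isSeparatedMap f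
  have hinj : IsLocallyInjective f := by
    intro x
    obtain ⟨e, hx, he⟩ := hch x
    exact ⟨e.source, e.open_source, hx, he ▸ e.injOn⟩
  set c := f 0 with hcdef
  set σ : E → ℝ → E := fun y s => c + s • (y - c) with hσdef
  have hσ : Continuous (fun p : E × ℝ => σ p.1 p.2) :=
    continuous_const.add (continuous_snd.smul (continuous_fst.sub continuous_const))
  have h0 : ∀ y, σ y 0 = f 0 := by intro y; simp [hσdef, hcdef]
  have hσy : ∀ y, Continuous (fun s => σ y s) := fun y =>
    hσ.comp (continuous_const.prodMk continuous_id)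
  have hlift : ∀ y, ∃ γ : ℝ → E, ContinuousOn γ (Icc 0 1) ∧ γ 0 = 0 ∧
      ∀ t ∈ Icc (0:ℝ) 1, f (γ t) = σ y t :=
    fun y => liftPath hcont hch hproper (fun s => σ y s) (hσy y) 0 (h0 y).symm
  choose γs hγcont hγ0 hγlift using hlift
  set g : E → E := fun y => γs y 1 with hgdef
  have hfg : ∀ y, f (g y) = y := by
    intro y
    have := hγlift y 1 ⟨zero_le_one, le_refl 1⟩
    rw [hgdef]
    simp only
    rw [this, hσdef]
    simp
  have huniq : ∀ y (γ' : ℝ → E), ContinuousOn γ' (Icc 0 1) → γ' 0 = 0 →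
      (∀ t ∈ Icc (0:ℝ) 1, f (γ' t) = σ y t) → γ' 1 = g y := by
    intro y γ' hc h0' hl
    have := hsep.eqOn_of_comp_eqOn hinj isPreconnected_Icc hc (hγcont y)
      (fun s hs => by show f (γ' s) = f (γs y s); rw [hl s hs, hγlift y s hs])
      (⟨le_refl 0, zero_le_one⟩ : (0:ℝ) ∈ Icc (0:ℝ) 1) (by rw [h0', hγ0 y])
    exact this ⟨zero_le_one, le_refl 1⟩
  have hgc : Continuous g := by
    rw [continuous_iff_continuousAt]
    intro y₀
    obtain ⟨V, hVopen, hy₀V, G, hGc, hG0, hGl⟩ :=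
      liftFamily hcont hch hproper σ hσ 0 h0 (fun τ hτ h => liftPath hcont hch hproper τ hτ 0 h) y₀
    have hEq : EqOn g (fun y => G y 1) V := by
      intro y hy
      have hc1 : ContinuousOn (fun s => G y s) (Icc 0 1) :=
        hGc.comp (Continuous.continuousOn (continuous_const.prodMk continuous_id))
          (fun s hs => ⟨hy, hs⟩)
      exact (huniq y (fun s => G y s) hc1 (hG0 y hy) (hGl y hy)).symm
    have hc2 : ContinuousOn (fun y => G y 1) V :=
      hGc.comp (Continuous.continuousOn (continuous_id.prodMk continuous_const))
        (fun y hy => ⟨hy, ⟨zero_le_one, le_refl 1⟩⟩)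
    exact (hc2.continuousAt (hVopen.mem_nhds hy₀V)).congr
      (Filter.eventuallyEq_of_mem (hVopen.mem_nhds hy₀V) fun y hy => (hEq hy).symm)
  have hgc0 : g (f 0) = 0 := by
    have hconst : ∀ t ∈ Icc (0:ℝ) 1, f ((fun _ => (0:E)) t) = σ (f 0) t := by
      intro t ht
      rw [hσdef]
      simp [hcdef]
    exact (huniq (f 0) (fun _ => 0) continuousOn_const rfl hconst).symm
  haveI : PreconnectedSpace E := ⟨(convex_univ : Convex ℝ (Set.univ : Set E)).isPreconnected⟩
  have hgf : g ∘ f = id := by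
    apply hsep.eq_of_comp_eq hinj (hgc.comp hcont) continuous_id _ 0
    · show g (f 0) = 0
      exact hgc0
    · funext x
      show f (g (f x)) = f x
      rw [hfg (f x)]
  exact ⟨g, hgc, hfg, fun x => congrFun hgf x⟩

end Aux3

theorem stmt8 (N : ℕ) (f : (Fin N → ℝ) → (Fin N → ℝ)) (hf : ContDiff ℝ 1 f) :
    (Function.Bijective f ∧ Differentiable ℝ (Function.invFun f)) ↔
    (Filter.Tendsto f (Filter.cocompact (Fin N → ℝ)) (Filter.cocompact (Fin N → ℝ)) ∧
      ∀ x, Function.Bijective (fderiv ℝ f x)) := by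
  have hcont : Continuous f := hf.continuous
  have hdiff : Differentiable ℝ f := hf.differentiable one_ne_zero
  constructor
  · rintro ⟨hbij, hdinv⟩
    have hgl : Function.LeftInverse (Function.invFun f) f := Function.leftInverse_invFun hbij.1
    have hgr : Function.RightInverse (Function.invFun f) f := Function.rightInverse_invFun hbij.2
    have hgc : Continuous (Function.invFun f) := hdinv.continuous
    constructor
    · rw [Filter.hasBasis_cocompact.tendsto_right_iff]
      intro K hK
      have hgK : IsCompact (Function.invFun f '' K) := hK.image hgc
      filter_upwards [hgK.compl_mem_cocompact] with x hx
      intro hfx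
      exact hx ⟨f x, hfx, hgl x⟩
    · intro x
      have h1 : fderiv ℝ (Function.invFun f ∘ f) x =
          (fderiv ℝ (Function.invFun f) (f x)).comp (fderiv ℝ f x) :=
        fderiv_comp x (hdinv _) (hdiff x)
      have h2 : Function.invFun f ∘ f = id := funext hgl
      rw [h2, fderiv_id] at h1
      have h3 : fderiv ℝ (f ∘ Function.invFun f) (f x) =
          (fderiv ℝ f (Function.invFun f (f x))).comp (fderiv ℝ (Function.invFun f) (f x)) :=
        fderiv_comp (f x) (by rw [hgl x]; exact hdiff x) (hdinv _)
      have h4 : f ∘ Function.invFun f = id := funext hgr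
      rw [h4, fderiv_id, hgl x] at h3
      constructor
      · intro v w hvw
        have hv := DFunLike.congr_fun h1 v
        have hw := DFunLike.congr_fun h1 w
        simp only [ContinuousLinearMap.coe_comp', Function.comp_apply,
          ContinuousLinearMap.coe_id', id_eq] at hv hw
        rw [hv, hw, hvw]
      · intro v
        refine ⟨fderiv ℝ (Function.invFun f) (f x) v, ?_⟩
        have hv := DFunLike.congr_fun h3 v
        simpa using hv.symm
  · rintro ⟨hprop, hbijD⟩
    have hproper : IsProperMap f := isProperMap_iff_tendsto_cocompact.mpr ⟨hcont, hprop⟩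
    have hch : ∀ x, ∃ e : OpenPartialHomeomorph (Fin N → ℝ) (Fin N → ℝ), x ∈ e.source ∧ ⇑e = f := by
      intro x
      have hsd : HasStrictFDerivAt f (fderiv ℝ f x) x :=
        (hf.contDiffAt).hasStrictFDerivAt one_ne_zero
      set L : (Fin N → ℝ) ≃L[ℝ] (Fin N → ℝ) :=
        (LinearEquiv.ofBijective ((fderiv ℝ f x) : (Fin N → ℝ) →ₗ[ℝ] (Fin N → ℝ))
          (hbijD x)).toContinuousLinearEquiv with hLdef
      have hLcoe : (L : (Fin N → ℝ) →L[ℝ] (Fin N → ℝ)) = fderiv ℝ f x := by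
        ext v
        simp [hLdef]
      have hsd' : HasStrictFDerivAt f (L : (Fin N → ℝ) →L[ℝ] (Fin N → ℝ)) x := by
        rw [hLcoe]; exact hsd
      exact ⟨hsd'.toOpenPartialHomeomorph f, hsd'.mem_toOpenPartialHomeomorph_source,
        hsd'.toOpenPartialHomeomorph_coe⟩
    obtain ⟨g, hgc, hfg, hgf⟩ := globalInverse hcont hch hproper
    have hbij : Function.Bijective f := Function.bijective_iff_has_inverse.mpr ⟨g, hgf, hfg⟩
    have hinvg : Function.invFun f = g := by
      funext y
      have hy : f (g y) = y := hfg y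
      calc Function.invFun f y = Function.invFun f (f (g y)) := by rw [hy]
        _ = g y := Function.leftInverse_invFun hbij.1 _
    refine ⟨hbij, ?_⟩
    rw [hinvg]
    intro y
    have hdf : HasFDerivAt f (fderiv ℝ f (g y)) (g y) := (hdiff (g y)).hasFDerivAt
    set L : (Fin N → ℝ) ≃L[ℝ] (Fin N → ℝ) :=
      (LinearEquiv.ofBijective ((fderiv ℝ f (g y)) : (Fin N → ℝ) →ₗ[ℝ] (Fin N → ℝ))
        (hbijD (g y))).toContinuousLinearEquiv with hLdef
    have hLcoe : (L : (Fin N → ℝ) →L[ℝ] (Fin N → ℝ)) = fderiv ℝ f (g y) := by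
      ext v
      simp [hLdef]
    have hdf' : HasFDerivAt f (L : (Fin N → ℝ) →L[ℝ] (Fin N → ℝ)) (g y) := by
      rw [hLcoe]; exact hdf
    have hres := HasFDerivAt.of_local_left_inverse hgc.continuousAt hdf'
      (Filter.Eventually.of_forall hfg)
    exact hres.differentiableAt
end

section
/- Let (Ω,F,ℙ) be a probability space, Z a strictly positive random variable with E[Z] = 1, U a utility function satisfying the standard conditions, Ũ its conjugate, and L a strictly positive random variable with E[Z·L] < ∞. For x > 0 set C(x) = {g : Ω → [0,∞) measurable : E[Z·g] ≤ x}. Suppose g ∈ C(x) satisfies E[Z·g] = x and there exists a constant y > 0 such that U'(g/L) = y·L·Z ℙ-almost surely and E[Ũ⁺(y·L·Z)] < ∞. Then E[U(g/L)] < ∞ and g is the unique (up to ℙ-a.s. equality) maximizer of g̃ ↦ E[U(g̃/L)] over g̃ ∈ C(x). -/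
open MeasureTheory
open scoped ENNReal

/-- Generalized expectation `E[W] = E[W⁺] − E[W⁻]` valued in `EReal`, with the
convention that it equals `⊥` when both parts are infinite. -/
noncomputable def eExp {Ω : Type*} [MeasurableSpace Ω] (P : Measure Ω) (W : Ω → ℝ) : EReal :=
  (∫⁻ ω, ENNReal.ofReal (W ω) ∂P).toEReal - (∫⁻ ω, ENNReal.ofReal (-(W ω)) ∂P).toEReal

/-- The class `C(x)` of (strictly positive) claims affordable from initial wealth `x`:
`g ≥ 0` measurable with `E[Z·g] ≤ x`. -/
def inC {Ω : Type*} [MeasurableSpace Ω] (P : Measure Ω) (Z : Ω → ℝ) (x : ℝ) (g : Ω → ℝ) : Prop :=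
  Measurable g ∧ (∀ ω, 0 < g ω) ∧
    ∫⁻ ω, ENNReal.ofReal (Z ω * g ω) ∂P ≤ ENNReal.ofReal x

lemma tangent_lt {U : ℝ → ℝ} (hconc : StrictConcaveOn ℝ (Set.Ioi 0) U)
    (hdiff : DifferentiableOn ℝ U (Set.Ioi 0)) {a b : ℝ} (ha : 0 < a) (hb : 0 < b)
    (hne : b ≠ a) : U b < U a + deriv U a * (b - a) := by
  have hda : DifferentiableAt ℝ U a :=
    (hdiff a ha).differentiableAt (isOpen_Ioi.mem_nhds ha)
  rcases lt_or_gt_of_ne hne with h | h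
  · have h1 := hconc.deriv_lt_slope hb ha h hda
    rw [slope_def_field] at h1
    have h' : 0 < a - b := by linarith
    rw [lt_div_iff₀ h'] at h1
    nlinarith
  · have h1 := hconc.slope_lt_deriv ha hb h hda
    rw [slope_def_field] at h1
    have h' : 0 < b - a := by linarith
    rw [div_lt_iff₀ h'] at h1
    nlinarith

lemma fenchel_lt {U : ℝ → ℝ} (hconc : StrictConcaveOn ℝ (Set.Ioi 0) U)
    (hdiff : DifferentiableOn ℝ U (Set.Ioi 0)) {a b : ℝ} (ha : 0 < a) (hb : 0 < b)
    (hne : b ≠ a) : U b - b * deriv U a < U a - a * deriv U a := by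
  nlinarith [tangent_lt hconc hdiff ha hb hne]

lemma fenchel_le {U : ℝ → ℝ} (hconc : StrictConcaveOn ℝ (Set.Ioi 0) U)
    (hdiff : DifferentiableOn ℝ U (Set.Ioi 0)) {a b : ℝ} (ha : 0 < a) (hb : 0 < b) :
    U b - b * deriv U a ≤ U a - a * deriv U a := by
  rcases eq_or_ne b a with rfl | hne
  · exact le_rfl
  · exact (fenchel_lt hconc hdiff ha hb hne).le

lemma conj_attained {U : ℝ → ℝ} (hconc : StrictConcaveOn ℝ (Set.Ioi 0) U)
    (hdiff : DifferentiableOn ℝ U (Set.Ioi 0)) {a : ℝ} (ha : 0 < a) :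
    conj U (deriv U a) = U a - a * deriv U a := by
  apply IsGreatest.csSup_eq
  constructor
  · exact ⟨a, ha, rfl⟩
  · rintro z ⟨b, hb, rfl⟩
    exact fenchel_le hconc hdiff ha hb

lemma ennreal_toEReal_eq {A : ℝ≥0∞} (hA : A ≠ ⊤) :
    A.toEReal = ((A.toReal : ℝ) : EReal) := by
  have h1 : (A : EReal) ≠ ⊤ := by simpa [EReal.coe_ennreal_eq_top_iff] using hA
  have h2 : (A : EReal) ≠ ⊥ := by
    intro h
    exact absurd (h ▸ EReal.coe_ennreal_nonneg A) (by simp)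
  rw [show ((A.toReal : ℝ)) = ((A : EReal)).toReal from (EReal.toReal_coe_ennreal).symm]
  exact (EReal.coe_toReal h1 h2).symm

lemma ofReal_le_nnnorm (r : ℝ) : ENNReal.ofReal r ≤ (‖r‖₊ : ℝ≥0∞) := by
  rw [← enorm_eq_nnnorm, Real.enorm_eq_ofReal_abs]
  exact ENNReal.ofReal_le_ofReal (le_abs_self r)

lemma eExp_eq_integral {Ω : Type*} [MeasurableSpace Ω] {P : Measure Ω} {f : Ω → ℝ}
    (hf : Integrable f P) : eExp P f = ((∫ ω, f ω ∂P : ℝ) : EReal) := by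
  have hA : ∫⁻ ω, ENNReal.ofReal (f ω) ∂P ≠ ⊤ :=
    ne_of_lt (lt_of_le_of_lt (lintegral_mono fun ω => ofReal_le_nnnorm (f ω)) hf.2)
  have hB : ∫⁻ ω, ENNReal.ofReal (-(f ω)) ∂P ≠ ⊤ :=
    ne_of_lt (lt_of_le_of_lt (lintegral_mono fun ω => by
      rw [← enorm_neg]; exact ofReal_le_nnnorm (-(f ω))) hf.2)
  rw [eExp, integral_eq_lintegral_pos_part_sub_lintegral_neg_part hf, EReal.coe_sub,
    ennreal_toEReal_eq hA, ennreal_toEReal_eq hB]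

theorem stmt9 {Ω : Type*} [MeasurableSpace Ω] (P : Measure Ω) [IsProbabilityMeasure P]
    (Z : Ω → ℝ) (hZmeas : Measurable Z) (hZpos : ∀ ω, 0 < Z ω)
    (hZint : Integrable Z P) (hZ1 : ∫ ω, Z ω ∂P = 1)
    (U : ℝ → ℝ)
    (hmono : StrictMonoOn U (Set.Ioi 0))
    (hconc : StrictConcaveOn ℝ (Set.Ioi 0) U)
    (hsmooth : ContDiffOn ℝ 1 U (Set.Ioi 0))
    (hinada0 : Filter.Tendsto (deriv U) (nhdsWithin 0 (Set.Ioi 0)) Filter.atTop)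
    (hinadaInf : Filter.Tendsto (deriv U) Filter.atTop (nhds 0))
    (L : Ω → ℝ) (hLmeas : Measurable L) (hLpos : ∀ ω, 0 < L ω)
    (hLint : ∫⁻ ω, ENNReal.ofReal (Z ω * L ω) ∂P < ⊤)
    (x : ℝ) (hx : 0 < x)
    (g : Ω → ℝ) (hg : inC P Z x g)
    (hbudget : ∫⁻ ω, ENNReal.ofReal (Z ω * g ω) ∂P = ENNReal.ofReal x)
    (y : ℝ) (hy : 0 < y)
    (hfoc : ∀ᵐ ω ∂P, deriv U (g ω / L ω) = y * L ω * Z ω)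
    (hconjint : Integrable (fun ω => max (conj U (y * L ω * Z ω)) 0) P) :
    eExp P (fun ω => U (g ω / L ω)) < ⊤ ∧
    (∀ g' : Ω → ℝ, inC P Z x g' →
      eExp P (fun ω => U (g' ω / L ω)) ≤ eExp P (fun ω => U (g ω / L ω))) ∧
    (∀ g' : Ω → ℝ, inC P Z x g' →
      eExp P (fun ω => U (g' ω / L ω)) = eExp P (fun ω => U (g ω / L ω)) →
      g' =ᵐ[P] g) := by
  obtain ⟨hgmeas, hgpos, -⟩ := hg
  have hdiff : DifferentiableOn ℝ U (Set.Ioi 0) := hsmooth.differentiableOn one_ne_zero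
  have hUcont : Continuous ((Set.Ioi (0:ℝ)).restrict U) :=
    continuousOn_iff_continuous_restrict.mp hsmooth.continuousOn
  have hUmeas : ∀ h : Ω → ℝ, Measurable h → (∀ ω, 0 < h ω) →
      Measurable fun ω => U (h ω) := by
    intro h hm hp
    have h1 : Measurable fun ω => (⟨h ω, hp ω⟩ : Set.Ioi (0:ℝ)) :=
      Measurable.subtype_mk hm
    exact hUcont.measurable.comp h1
  have hap : ∀ ω, 0 < g ω / L ω := fun ω => div_pos (hgpos ω) (hLpos ω)
  have hVattain : ∀ᵐ ω ∂P, conj U (y * L ω * Z ω)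
      = U (g ω / L ω) - (g ω / L ω) * (y * L ω * Z ω) := by
    filter_upwards [hfoc] with ω hω
    have h1 := conj_attained hconc hdiff (hap ω)
    rwa [hω] at h1
  have hfen : ∀ᵐ ω ∂P, ∀ b, 0 < b →
      U b - b * (y * L ω * Z ω) ≤ U (g ω / L ω) - (g ω / L ω) * (y * L ω * Z ω) := by
    filter_upwards [hfoc] with ω hω b hb
    have h1 := fenchel_le hconc hdiff (hap ω) hb
    rwa [hω] at h1
  have hfenlt : ∀ᵐ ω ∂P, ∀ b, 0 < b → b ≠ g ω / L ω →
      U b - b * (y * L ω * Z ω) < U (g ω / L ω) - (g ω / L ω) * (y * L ω * Z ω) := by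
    filter_upwards [hfoc] with ω hω b hb hne
    have h1 := fenchel_lt hconc hdiff (hap ω) hb hne
    rwa [hω] at h1
  have hint_of : ∀ h : Ω → ℝ, Measurable h → (∀ ω, 0 < h ω) →
      (∫⁻ ω, ENNReal.ofReal (Z ω * h ω) ∂P) < ⊤ →
      Integrable (fun ω => Z ω * h ω) P := by
    intro h hm hp hfin
    refine ⟨(hZmeas.mul hm).aestronglyMeasurable, ?_⟩
    rw [hasFiniteIntegral_iff_ofReal
      (Filter.Eventually.of_forall fun ω => (mul_pos (hZpos ω) (hp ω)).le)]
    exact hfin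
  have hZg_int : Integrable (fun ω => Z ω * g ω) P :=
    hint_of g hgmeas hgpos (by rw [hbudget]; exact ENNReal.ofReal_lt_top)
  have hZL_int : Integrable (fun ω => Z ω * L ω) P := hint_of L hLmeas hLpos hLint
  have hZg_eq : ∫ ω, Z ω * g ω ∂P = x := by
    rw [integral_eq_lintegral_of_nonneg_ae
      (Filter.Eventually.of_forall fun ω => (mul_pos (hZpos ω) (hgpos ω)).le)
      (hZmeas.mul hgmeas).aestronglyMeasurable, hbudget, ENNReal.toReal_ofReal hx.le]
  have hφmeas : Measurable fun ω => U (g ω / L ω) := hUmeas _ (hgmeas.div hLmeas) hap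
  have hmul : ∀ ω, (g ω / L ω) * (y * L ω * Z ω) = y * (Z ω * g ω) := by
    intro ω
    have hL : L ω ≠ 0 := (hLpos ω).ne'
    field_simp
  have hVkey : (fun ω => conj U (y * L ω * Z ω)) =ᵐ[P]
      fun ω => U (g ω / L ω) - y * (Z ω * g ω) := by
    filter_upwards [hVattain] with ω hω
    rw [hω, hmul ω]
  have hVsm : AEStronglyMeasurable (fun ω => conj U (y * L ω * Z ω)) P :=
    ((hφmeas.sub ((hZmeas.mul hgmeas).const_mul y)).aestronglyMeasurable).congr hVkey.symm
  have hVint : Integrable (fun ω => conj U (y * L ω * Z ω)) P := by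
    refine Integrable.mono'
      (g := fun ω => max (conj U (y * L ω * Z ω)) 0 + (|U 1| + y * (Z ω * L ω)))
      (hconjint.add ((integrable_const _).add (hZL_int.const_mul y))) hVsm ?_
    filter_upwards [hfen, hVattain] with ω hf hat
    have h1 : U 1 - 1 * (y * L ω * Z ω) ≤ conj U (y * L ω * Z ω) := by
      rw [hat]; exact hf 1 one_pos
    have h2 : y * L ω * Z ω = y * (Z ω * L ω) := by ring
    have h3 := le_max_right (conj U (y * L ω * Z ω)) 0
    have h4 := le_max_left (conj U (y * L ω * Z ω)) 0
    have h5 := neg_abs_le (U 1)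
    have h6 := abs_nonneg (U 1)
    have h7 : 0 ≤ y * (Z ω * L ω) :=
      mul_nonneg hy.le (mul_pos (hZpos ω) (hLpos ω)).le
    rw [Real.norm_eq_abs, abs_le]
    constructor
    · nlinarith
    · nlinarith
  have hφint : Integrable (fun ω => U (g ω / L ω)) P := by
    refine (hVint.add (hZg_int.const_mul y)).congr ?_
    filter_upwards [hVkey] with ω hω
    have h1 : conj U (y * L ω * Z ω) = U (g ω / L ω) - y * (Z ω * g ω) := hω
    show conj U (y * L ω * Z ω) + y * (Z ω * g ω) = U (g ω / L ω)
    linarith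
  have hIeq : ∫ ω, U (g ω / L ω) ∂P = (∫ ω, conj U (y * L ω * Z ω) ∂P) + y * x := by
    rw [← hZg_eq, ← integral_const_mul, ← integral_add hVint (hZg_int.const_mul y)]
    apply integral_congr_ae
    filter_upwards [hVkey] with ω hω
    show U (g ω / L ω) = conj U (y * L ω * Z ω) + y * (Z ω * g ω)
    rw [hω]
    ring
  have main : ∀ g' : Ω → ℝ, inC P Z x g' →
      eExp P (fun ω => U (g' ω / L ω)) ≤ ((∫ ω, U (g ω / L ω) ∂P : ℝ) : EReal) ∧
      (eExp P (fun ω => U (g' ω / L ω)) = ((∫ ω, U (g ω / L ω) ∂P : ℝ) : EReal) →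
        g' =ᵐ[P] g) := by
    rintro g' ⟨hg'meas, hg'pos, hg'bound⟩
    have ha'p : ∀ ω, 0 < g' ω / L ω := fun ω => div_pos (hg'pos ω) (hLpos ω)
    have hφ'meas : Measurable fun ω => U (g' ω / L ω) :=
      hUmeas _ (hg'meas.div hLmeas) ha'p
    have hZg'_int : Integrable (fun ω => Z ω * g' ω) P :=
      hint_of g' hg'meas hg'pos (lt_of_le_of_lt hg'bound ENNReal.ofReal_lt_top)
    have hZg'_le : ∫ ω, Z ω * g' ω ∂P ≤ x := by
      rw [integral_eq_lintegral_of_nonneg_ae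
        (Filter.Eventually.of_forall fun ω => (mul_pos (hZpos ω) (hg'pos ω)).le)
        (hZmeas.mul hg'meas).aestronglyMeasurable]
      calc (∫⁻ ω, ENNReal.ofReal (Z ω * g' ω) ∂P).toReal
          ≤ (ENNReal.ofReal x).toReal :=
            ENNReal.toReal_mono ENNReal.ofReal_ne_top hg'bound
        _ = x := ENNReal.toReal_ofReal hx.le
    have hmul' : ∀ ω, (g' ω / L ω) * (y * L ω * Z ω) = y * (Z ω * g' ω) := by
      intro ω
      have hL : L ω ≠ 0 := (hLpos ω).ne'
      field_simp
    have hW'int : Integrable (fun ω => conj U (y * L ω * Z ω) + y * (Z ω * g' ω)) P :=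
      hVint.add (hZg'_int.const_mul y)
    have hle : (fun ω => U (g' ω / L ω)) ≤ᵐ[P]
        fun ω => conj U (y * L ω * Z ω) + y * (Z ω * g' ω) := by
      filter_upwards [hVattain, hfen] with ω hat hf
      have h1 := hf (g' ω / L ω) (ha'p ω)
      rw [← hat] at h1
      have h2 := hmul' ω
      show U (g' ω / L ω) ≤ conj U (y * L ω * Z ω) + y * (Z ω * g' ω)
      linarith
    have hW'le : ∫ ω, (conj U (y * L ω * Z ω) + y * (Z ω * g' ω)) ∂P
        ≤ ∫ ω, U (g ω / L ω) ∂P := by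
      rw [integral_add hVint (hZg'_int.const_mul y), integral_const_mul, hIeq]
      have h1 := mul_le_mul_of_nonneg_left hZg'_le hy.le
      linarith
    have hA' : (∫⁻ ω, ENNReal.ofReal (U (g' ω / L ω)) ∂P) ≠ ⊤ := by
      have h1 : (∫⁻ ω, ENNReal.ofReal (U (g' ω / L ω)) ∂P)
          ≤ ∫⁻ ω, (‖conj U (y * L ω * Z ω) + y * (Z ω * g' ω)‖₊ : ℝ≥0∞) ∂P := by
        apply lintegral_mono_ae
        filter_upwards [hle] with ω hω
        exact le_trans (ENNReal.ofReal_le_ofReal hω) (ofReal_le_nnnorm _)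
      exact ne_of_lt (lt_of_le_of_lt h1 hW'int.2)
    by_cases hB' : (∫⁻ ω, ENNReal.ofReal (-(U (g' ω / L ω))) ∂P) = ⊤
    · have hbot : eExp P (fun ω => U (g' ω / L ω)) = ⊥ := by
        simp only [eExp]
        rw [hB']
        rw [show ((⊤:ℝ≥0∞).toEReal) = (⊤ : EReal) from rfl]
        rw [sub_eq_add_neg, EReal.neg_top, EReal.add_bot]
      constructor
      · rw [hbot]; exact bot_le
      · intro hcontra
        rw [hbot] at hcontra
        exact absurd hcontra.symm (EReal.coe_ne_bot _)
    · have hφ'int : Integrable (fun ω => U (g' ω / L ω)) P := by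
        refine ⟨hφ'meas.aestronglyMeasurable, ?_⟩
        rw [HasFiniteIntegral]
        have h1 : ∀ ω, (‖U (g' ω / L ω)‖₊ : ℝ≥0∞) ≤
            ENNReal.ofReal (U (g' ω / L ω)) + ENNReal.ofReal (-(U (g' ω / L ω))) := by
          intro ω
          rw [← enorm_eq_nnnorm, Real.enorm_eq_ofReal_abs]
          rcases abs_cases (U (g' ω / L ω)) with ⟨h, _⟩ | ⟨h, _⟩
          · rw [h]; exact le_self_add
          · rw [h]; exact le_add_self
        calc ∫⁻ ω, (‖U (g' ω / L ω)‖₊ : ℝ≥0∞) ∂P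
            ≤ ∫⁻ ω, (ENNReal.ofReal (U (g' ω / L ω))
                + ENNReal.ofReal (-(U (g' ω / L ω)))) ∂P := lintegral_mono h1
          _ = (∫⁻ ω, ENNReal.ofReal (U (g' ω / L ω)) ∂P)
                + ∫⁻ ω, ENNReal.ofReal (-(U (g' ω / L ω))) ∂P :=
              lintegral_add_left (hφ'meas.ennreal_ofReal) _
          _ < ⊤ := ENNReal.add_lt_top.mpr
              ⟨lt_top_iff_ne_top.mpr hA', lt_top_iff_ne_top.mpr hB'⟩
      have heq : eExp P (fun ω => U (g' ω / L ω))
          = ((∫ ω, U (g' ω / L ω) ∂P : ℝ) : EReal) := eExp_eq_integral hφ'int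
      have hint_le : ∫ ω, U (g' ω / L ω) ∂P ≤ ∫ ω, U (g ω / L ω) ∂P :=
        le_trans (integral_mono_ae hφ'int hW'int hle) hW'le
      refine ⟨by rw [heq]; exact EReal.coe_le_coe_iff.mpr hint_le, ?_⟩
      intro hEq
      rw [heq] at hEq
      have hEq' : ∫ ω, U (g' ω / L ω) ∂P = ∫ ω, U (g ω / L ω) ∂P :=
        EReal.coe_eq_coe_iff.mp hEq
      have hsub_nonneg : 0 ≤ᵐ[P] fun ω =>
          (conj U (y * L ω * Z ω) + y * (Z ω * g' ω)) - U (g' ω / L ω) := by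
        filter_upwards [hle] with ω hω
        simp only [Pi.zero_apply, sub_nonneg]
        exact hω
      have hsub_int : Integrable (fun ω =>
          (conj U (y * L ω * Z ω) + y * (Z ω * g' ω)) - U (g' ω / L ω)) P :=
        hW'int.sub hφ'int
      have hzero : ∫ ω, ((conj U (y * L ω * Z ω) + y * (Z ω * g' ω))
          - U (g' ω / L ω)) ∂P = 0 := by
        rw [integral_sub hW'int hφ'int]
        have h1 := integral_mono_ae hφ'int hW'int hle
        linarith
      have hae := (integral_eq_zero_iff_of_nonneg_ae hsub_nonneg hsub_int).mp hzero
      filter_upwards [hae, hVattain, hfenlt] with ω h0 hat hlt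
      by_contra hne
      have ha'ne : g' ω / L ω ≠ g ω / L ω := by
        intro h
        apply hne
        have hL : L ω ≠ 0 := (hLpos ω).ne'
        rw [div_eq_div_iff hL hL] at h
        exact mul_right_cancel₀ hL h
      have h1 := hlt (g' ω / L ω) (ha'p ω) ha'ne
      rw [← hat] at h1
      have h2 := hmul' ω
      have h0' : (conj U (y * L ω * Z ω) + y * (Z ω * g' ω)) - U (g' ω / L ω) = 0 := h0
      linarith
  refine ⟨?_, ?_, ?_⟩
  · rw [eExp_eq_integral hφint]
    exact EReal.coe_lt_top _
  · intro g' hg'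
    rw [eExp_eq_integral hφint]
    exact (main g' hg').1
  · intro g' hg' hEq
    rw [eExp_eq_integral hφint] at hEq
    exact (main g' hg').2 hEq
end
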